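/- arXiv:math/0609474 — 3 statements merged into one kernel-verified Lean document; each statement's English description precedes it below -/
import Mathlib

section
/- For k ≥ 2 and γ > 1, the ball B(r) = {x : d(x,O) ≤ r} in Γ_{k,γ} satisfies lim_{r→∞} (log #B(r))/(log r) = (log(γk))/(log γ) = 1 + (log k)/(log γ). -/
open Classical

noncomputable section

/-- Length ⌊γ^j⌋ of the edges (segments) at generation `j` of the sparse tree. -/
def edgeLen (γ : ℝ) (j : ℕ) : ℕ := ⌊γ ^ j⌋₊

/-- The distance Σ_{j=1}^N ⌊γ^j⌋ from the root to the N-th generation of junctions. -/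
def junctionDist (γ : ℝ) (N : ℕ) : ℕ := ∑ j ∈ Finset.Icc 1 N, edgeLen γ j

/-- A vertex of the sparse tree Γ_{k,γ}: a list of branch choices made at the
junctions already passed, together with a position `t` along the current segment
(the root is `([], 0)`; a vertex with choices `w ≠ []` sits at position
`1 ≤ t ≤ ⌊γ^{|w|}⌋` along the segment of generation `|w|`, the segment's far end
`t = ⌊γ^{|w|}⌋` being the next junction). -/
def SparseVertex (k : ℕ) (γ : ℝ) : Type :=
  {p : List (Fin k) × ℕ //
    (p.1 = [] ∧ p.2 = 0) ∨ (p.1 ≠ [] ∧ 1 ≤ p.2 ∧ p.2 ≤ edgeLen γ p.1.length)}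

/-- The root `O` of Γ_{k,γ}. -/
def sparseRoot (k : ℕ) (γ : ℝ) : SparseVertex k γ := ⟨([], 0), Or.inl ⟨rfl, rfl⟩⟩

/-- A vertex is a junction iff it is the root or lies at the far end of its segment,
i.e. at distance Σ_{j=1}^N ⌊γ^j⌋ from the root for some N. Junctions have k forward
neighbours; all other vertices have one. -/
def isJunction {k : ℕ} {γ : ℝ} (v : SparseVertex k γ) : Prop :=
  (v.val.1 = [] ∧ v.val.2 = 0) ∨ (v.val.1 ≠ [] ∧ v.val.2 = edgeLen γ v.val.1.length)

/-- `u` is a forward neighbour of `v`. -/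
def forwardNbr {k : ℕ} {γ : ℝ} (v u : SparseVertex k γ) : Prop :=
  (¬ isJunction v ∧ u.val.1 = v.val.1 ∧ u.val.2 = v.val.2 + 1) ∨
  (isJunction v ∧ ∃ c : Fin k, u.val.1 = v.val.1 ++ [c] ∧ u.val.2 = 1)

/-- The sparse tree Γ_{k,γ} as a simple graph. -/
def sparseGraph (k : ℕ) (γ : ℝ) : SimpleGraph (SparseVertex k γ) :=
  SimpleGraph.fromRel (fun v u => forwardNbr v u)

/-- Graph distance from the root: |x| = d(x, O). -/
def distToRoot {k : ℕ} {γ : ℝ} (v : SparseVertex k γ) : ℕ :=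
  (sparseGraph k γ).dist (sparseRoot k γ) v

-- ===== auxiliary =====
namespace Sparse

variable {k : ℕ} {γ : ℝ}

lemma one_le_edgeLen (hγ : 1 < γ) (j : ℕ) : 1 ≤ edgeLen γ j := by
  have : (1:ℝ) ≤ γ ^ j := one_le_pow₀ hγ.le
  exact Nat.le_floor (by exact_mod_cast this)

lemma edgeLen_le (hγ : 1 < γ) (j : ℕ) : (edgeLen γ j : ℝ) ≤ γ ^ j :=
  Nat.floor_le (by positivity)

lemma half_le_edgeLen (hγ : 1 < γ) (j : ℕ) : γ ^ j / 2 ≤ (edgeLen γ j : ℝ) := by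
  have h1 : (1:ℝ) ≤ (edgeLen γ j : ℝ) := by exact_mod_cast one_le_edgeLen hγ j
  have h2 : γ ^ j < (edgeLen γ j : ℝ) + 1 := Nat.lt_floor_add_one _
  linarith

lemma junctionDist_zero : junctionDist γ 0 = 0 := by simp [junctionDist]

lemma junctionDist_succ (N : ℕ) :
    junctionDist γ (N + 1) = junctionDist γ N + edgeLen γ (N + 1) := by
  unfold junctionDist
  exact Finset.sum_Icc_succ_top (Nat.le_add_left 1 N) _

lemma junctionDist_pred {m : ℕ} (hm : 1 ≤ m) :
    junctionDist γ (m - 1) + edgeLen γ m = junctionDist γ m := by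
  obtain ⟨n, rfl⟩ := Nat.exists_eq_add_of_le hm
  simpa [Nat.add_comm] using (junctionDist_succ (γ := γ) n).symm

lemma junctionDist_mono : Monotone (junctionDist γ) := by
  intro a b hab
  exact Finset.sum_le_sum_of_subset (Finset.Icc_subset_Icc_right hab)

lemma le_junctionDist (hγ : 1 < γ) (N : ℕ) : N ≤ junctionDist γ N := by
  calc N = ∑ _j ∈ Finset.Icc 1 N, 1 := by simp
  _ ≤ junctionDist γ N := Finset.sum_le_sum fun j _ => one_le_edgeLen hγ j

lemma edgeLen_le_junctionDist (hγ : 1 < γ) {N : ℕ} (hN : 1 ≤ N) :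
    edgeLen γ N ≤ junctionDist γ N :=
  Finset.single_le_sum (f := fun j => edgeLen γ j) (fun _ _ => Nat.zero_le _)
    (Finset.mem_Icc.2 ⟨hN, le_rfl⟩)

lemma junctionDist_le (hγ : 1 < γ) (N : ℕ) :
    (junctionDist γ N : ℝ) ≤ γ ^ (N + 1) / (γ - 1) := by
  have hne : γ ≠ 1 := ne_of_gt hγ
  have h1 : (junctionDist γ N : ℝ) ≤ ∑ j ∈ Finset.Icc 1 N, γ ^ j := by
    rw [junctionDist]
    push_cast
    exact Finset.sum_le_sum fun j _ => edgeLen_le hγ j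
  have h2 : ∑ j ∈ Finset.Icc 1 N, γ ^ j ≤ ∑ j ∈ Finset.range (N + 1), γ ^ j := by
    apply Finset.sum_le_sum_of_subset_of_nonneg
    · intro x hx
      simp only [Finset.mem_Icc, Finset.mem_range] at *
      omega
    · intro j _ _; positivity
  have h3 : ∑ j ∈ Finset.range (N + 1), γ ^ j = (γ ^ (N + 1) - 1) / (γ - 1) :=
    geom_sum_eq hne _
  have h4 : (γ ^ (N + 1) - 1) / (γ - 1) ≤ γ ^ (N + 1) / (γ - 1) := by
    gcongr
    · linarith
  linarith

/-- distance function candidate -/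
def fdist (v : SparseVertex k γ) : ℕ :=
  if v.val.1 = [] then 0 else junctionDist γ (v.val.1.length - 1) + v.val.2

lemma fdist_root : fdist (sparseRoot k γ) = 0 := by simp [fdist, sparseRoot]

lemma fdist_forward (hγ : 1 < γ) {v u : SparseVertex k γ} (h : forwardNbr v u) :
    fdist u = fdist v + 1 := by
  rcases h with ⟨hnj, h1, h2⟩ | ⟨hj, c, h1, h2⟩
  · -- same segment, step forward
    have hne : v.val.1 ≠ [] := by
      intro he
      rcases v.property with ⟨h3, h4⟩ | ⟨h3, _⟩
      · exact hnj (Or.inl ⟨h3, h4⟩)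
      · exact h3 he
    have hneu : u.val.1 ≠ [] := h1 ▸ hne
    simp only [fdist, if_neg hne, if_neg hneu, h1, h2]
    ring
  · -- jump from junction to new segment
    rcases hj with ⟨he, h0⟩ | ⟨hne, hel⟩
    · have hu1 : u.val.1 = [c] := by simpa [he] using h1
      have hneu : u.val.1 ≠ [] := by simp [hu1]
      simp [fdist, if_pos he, if_neg hneu, hu1, h2, junctionDist_zero]
    · have hneu : u.val.1 ≠ [] := by
        rw [h1]; simp
      have hlen : u.val.1.length = v.val.1.length + 1 := by rw [h1]; simp
      have hvl : 1 ≤ v.val.1.length := List.length_pos_iff.2 hne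
      simp only [fdist, if_neg hne, if_neg hneu, hlen, h2, hel, Nat.add_sub_cancel]
      rw [junctionDist_pred hvl]

-- continuing namespace Sparse, variables {k γ}

lemma fdist_adj (hγ : 1 < γ) {v u : SparseVertex k γ}
    (h : (sparseGraph k γ).Adj v u) : fdist u ≤ fdist v + 1 := by
  rw [sparseGraph, SimpleGraph.fromRel_adj] at h
  rcases h.2 with h' | h'
  · exact (fdist_forward hγ h').le
  · have := fdist_forward hγ h'
    omega

lemma fdist_le_walk_length (hγ : 1 < γ) {v u : SparseVertex k γ}
    (w : (sparseGraph k γ).Walk v u) : fdist u ≤ fdist v + w.length := by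
  induction w with
  | nil => simp
  | cons h p ih =>
    have := fdist_adj hγ h
    simp only [SimpleGraph.Walk.length_cons]
    omega

lemma fdist_eq_zero {v : SparseVertex k γ} (h : fdist v = 0) : v = sparseRoot k γ := by
  by_cases he : v.val.1 = []
  · rcases v.property with ⟨h1, h2⟩ | ⟨h1, _⟩
    · apply Subtype.ext
      exact Prod.ext h1 h2
    · exact absurd he h1
  · rcases v.property with ⟨h1, _⟩ | ⟨_, h2, _⟩
    · exact absurd h1 he
    · simp only [fdist, if_neg he] at h
      omega

lemma exists_pred (hγ : 1 < γ) {v : SparseVertex k γ} (hne : v.val.1 ≠ []) :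
    ∃ p : SparseVertex k γ, forwardNbr p v ∧ fdist v = fdist p + 1 := by
  obtain ⟨⟨w, t⟩, hv⟩ := v
  simp only at hne
  dsimp only at hv ⊢
  rcases hv with ⟨h1, _⟩ | ⟨_, ht1, ht2⟩
  · exact absurd h1 hne
  by_cases h2 : 2 ≤ t
  · -- predecessor on the same segment
    refine ⟨⟨(w, t - 1), Or.inr ⟨hne, by omega, by dsimp only; omega⟩⟩,
        Or.inl ⟨?_, rfl, by dsimp only; omega⟩, ?_⟩
    · rintro (⟨h3, _⟩ | ⟨_, h4⟩)
      · exact hne h3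
      · dsimp only at h4
        omega
    · simp only [fdist, if_neg hne]
      omega
  · -- t = 1 : predecessor is the junction at the end of the previous segment
    have ht : t = 1 := by omega
    subst ht
    by_cases hw : w.dropLast = []
    · -- previous junction is the root
      have hlen : w.length = 1 := by
        have := @List.length_dropLast _ w
        rw [hw] at this
        simp only [List.length_nil] at this
        have := List.length_pos_iff.2 hne
        omega
      obtain ⟨a, rfl⟩ := List.length_eq_one_iff.1 hlen
      refine ⟨sparseRoot k γ, Or.inr ⟨Or.inl ⟨rfl, rfl⟩, a, by simp [sparseRoot], rfl⟩, ?_⟩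
      simp [fdist, sparseRoot, hne, junctionDist_zero]
    · -- previous junction at the end of segment of generation w.length - 1
      have hlw : 2 ≤ w.length := by
        have h1 := @List.length_dropLast _ w
        have h2 := List.length_pos_iff.2 hw
        omega
      have hlen' : w.dropLast.length = w.length - 1 := @List.length_dropLast _ w
      refine ⟨⟨(w.dropLast, edgeLen γ w.dropLast.length),
          Or.inr ⟨hw, one_le_edgeLen hγ _, le_rfl⟩⟩,
          Or.inr ⟨Or.inr ⟨hw, rfl⟩, w.getLast hne, ?_, rfl⟩, ?_⟩
      · exact (List.dropLast_append_getLast hne).symm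
      · simp only [fdist, if_neg hne, if_neg hw, hlen']
        have : junctionDist γ (w.length - 1 - 1) + edgeLen γ (w.length - 1) =
            junctionDist γ (w.length - 1) := junctionDist_pred (by omega)
        omega

lemma exists_walk_fdist (hγ : 1 < γ) :
    ∀ n : ℕ, ∀ v : SparseVertex k γ, fdist v ≤ n →
      ∃ w : (sparseGraph k γ).Walk (sparseRoot k γ) v, w.length = fdist v := by
  intro n
  induction n with
  | zero =>
    intro v hv
    have := fdist_eq_zero (Nat.le_zero.1 hv)
    subst this
    exact ⟨SimpleGraph.Walk.nil, by simp [fdist_root]⟩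
  | succ n ih =>
    intro v hv
    by_cases h0 : fdist v ≤ n
    · exact ih v h0
    have hne : v.val.1 ≠ [] := by
      intro he
      apply h0
      rcases v.property with ⟨h1, h2⟩ | ⟨h1, _⟩
      · simp [fdist, h1]
      · exact absurd he h1
    obtain ⟨p, hp, hfd⟩ := exists_pred hγ hne
    obtain ⟨wp, hwp⟩ := ih p (by omega)
    have hadj : (sparseGraph k γ).Adj p v := by
      rw [sparseGraph, SimpleGraph.fromRel_adj]
      refine ⟨?_, Or.inl hp⟩
      intro he
      rw [he] at hfd
      omega
    exact ⟨wp.concat hadj, by rw [SimpleGraph.Walk.length_concat, hwp]; omega⟩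

lemma distToRoot_eq (hγ : 1 < γ) (v : SparseVertex k γ) : distToRoot v = fdist v := by
  obtain ⟨w, hw⟩ := exists_walk_fdist hγ (fdist v) v le_rfl
  have hle : distToRoot v ≤ fdist v := by
    rw [distToRoot, ← hw]
    exact SimpleGraph.dist_le w
  have hreach : (sparseGraph k γ).Reachable (sparseRoot k γ) v := ⟨w⟩
  obtain ⟨w', hw'⟩ := hreach.exists_walk_length_eq_dist
  have := fdist_le_walk_length hγ w'
  rw [hw', fdist_root] at this
  rw [distToRoot] at *
  omega

-- ===== counting =====

lemma edgeLen_mono (hγ : 1 < γ) : Monotone (edgeLen γ) := fun a b hab =>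
  Nat.floor_mono (pow_le_pow_right₀ hγ.le hab)

/-- the ball w.r.t. fdist -/
def ball (k : ℕ) (γ : ℝ) (r : ℕ) : Set (SparseVertex k γ) := {v | fdist v ≤ r}

lemma ball_lower (hγ : 1 < γ) {N r : ℕ} (hN : 1 ≤ N) (hjr : junctionDist γ N ≤ r)
    (hfin : (ball k γ r).Finite) :
    k ^ N * edgeLen γ N ≤ (ball k γ r).ncard := by
  set E := edgeLen γ N with hE
  have hE1 : 1 ≤ E := one_le_edgeLen hγ N
  let φ : ((Fin N → Fin k) × Fin E) → SparseVertex k γ := fun x =>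
    ⟨(List.ofFn x.1, (x.2 : ℕ) + 1),
      Or.inr ⟨by simp [List.ofFn_eq_nil_iff]; omega, by omega, by
        simp only [List.length_ofFn]
        have := x.2.isLt
        omega⟩⟩
  have hinj : Function.Injective φ := by
    intro x y hxy
    have h := congrArg Subtype.val hxy
    simp only [φ, Prod.mk.injEq] at h
    obtain ⟨h1, h2⟩ := h
    have hf : x.1 = y.1 := by
      have := List.ofFn_inj.1 h1
      exact funext_iff.2 fun i => congrFun this i
    have ht : x.2 = y.2 := Fin.ext (by omega)
    exact Prod.ext hf ht
  have hsub : Set.range φ ⊆ ball k γ r := by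
    rintro _ ⟨x, rfl⟩
    show fdist _ ≤ r
    have hne : List.ofFn x.1 ≠ [] := by simp [List.ofFn_eq_nil_iff]; omega
    simp only [fdist, φ, if_neg hne, List.length_ofFn]
    have h1 : junctionDist γ (N - 1) + ((x.2 : ℕ) + 1) ≤ junctionDist γ (N - 1) + E := by
      have := x.2.isLt
      omega
    have h2 : junctionDist γ (N - 1) + E = junctionDist γ N := junctionDist_pred hN
    omega
  calc k ^ N * E = Nat.card ((Fin N → Fin k) × Fin E) := by
        simp [Nat.card_eq_fintype_card]
  _ = (Set.univ : Set ((Fin N → Fin k) × Fin E)).ncard := (Set.ncard_univ _).symm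
  _ = (φ '' Set.univ).ncard := (Set.ncard_image_of_injective _ hinj).symm
  _ ≤ (ball k γ r).ncard := by
        apply Set.ncard_le_ncard _ hfin
        rw [Set.image_univ]
        exact hsub

/-- base-k code of a list, injective for fixed length -/
def code (k : ℕ) : List (Fin k) → ℕ
  | [] => 0
  | a :: l => (a : ℕ) + k * code k l

lemma code_lt (hk : 1 ≤ k) : ∀ l : List (Fin k), code k l < k ^ l.length := by
  intro l
  induction l with
  | nil => simpa [code] using hk
  | cons a l ih =>
    have ha : (a : ℕ) < k := a.isLt
    simp only [code, List.length_cons, pow_succ]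
    calc (a : ℕ) + k * code k l ≤ (k - 1) + k * (k ^ l.length - 1) := by
          have : code k l ≤ k ^ l.length - 1 := by omega
          have := Nat.mul_le_mul_left k this
          omega
    _ < k ^ l.length * k := by
          have hkl : 1 ≤ k ^ l.length := Nat.one_le_pow _ _ hk
          have : k * (k ^ l.length - 1) = k * k ^ l.length - k := by
            rw [Nat.mul_sub]
            omega
          rw [this]
          have h2 : k ≤ k * k ^ l.length := Nat.le_mul_of_pos_right k hkl
          rw [Nat.mul_comm (k ^ l.length) k]
          omega

lemma code_inj (hk : 1 ≤ k) : ∀ l1 l2 : List (Fin k), l1.length = l2.length →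
    code k l1 = code k l2 → l1 = l2 := by
  intro l1
  induction l1 with
  | nil =>
    intro l2 hlen _
    exact (List.length_eq_zero_iff.1 hlen.symm).symm
  | cons a l ih =>
    intro l2 hlen hcode
    cases l2 with
    | nil => simp at hlen
    | cons b l2 =>
      simp only [List.length_cons] at hlen
      simp only [code] at hcode
      have ha : (a : ℕ) < k := a.isLt
      have hb : (b : ℕ) < k := b.isLt
      have hmod : (a : ℕ) = (b : ℕ) := by
        have h1 : ((a : ℕ) + k * code k l) % k = (a : ℕ) % k := by
          simp [Nat.add_mul_mod_self_left]
        have h2 : ((b : ℕ) + k * code k l2) % k = (b : ℕ) % k := by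
          simp [Nat.add_mul_mod_self_left]
        rw [hcode, h2] at h1
        rw [Nat.mod_eq_of_lt hb, Nat.mod_eq_of_lt ha] at h1
        omega
      have htail : code k l = code k l2 := by
        have : k * code k l = k * code k l2 := by omega
        exact Nat.eq_of_mul_eq_mul_left (by omega) this
      rw [Fin.ext hmod, ih l2 (by omega) htail]

def enc (k : ℕ) (l : List (Fin k)) : ℕ := code k l + k ^ l.length

lemma enc_lt (hk : 1 ≤ k) (l : List (Fin k)) : enc k l < 2 * k ^ l.length := by
  have := code_lt hk l
  simp only [enc]
  omega

lemma enc_inj (hk : 2 ≤ k) : Function.Injective (enc k) := by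
  intro l1 l2 h
  have hlen : l1.length = l2.length := by
    by_contra hne
    rcases Nat.lt_or_ge l1.length l2.length with hlt | hge
    · have h1 : enc k l1 < 2 * k ^ l1.length := enc_lt (by omega) l1
      have h2 : 2 * k ^ l1.length ≤ k ^ l2.length := by
        calc 2 * k ^ l1.length ≤ k * k ^ l1.length := by
              have := Nat.one_le_pow l1.length k (by omega)
              exact Nat.mul_le_mul_right _ hk
        _ = k ^ (l1.length + 1) := by ring
        _ ≤ k ^ l2.length := Nat.pow_le_pow_right (by omega) (by omega)
      have h3 : k ^ l2.length ≤ enc k l2 := by simp [enc]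
      omega
    · have hlt : l2.length < l1.length := by omega
      have h1 : enc k l2 < 2 * k ^ l2.length := enc_lt (by omega) l2
      have h2 : 2 * k ^ l2.length ≤ k ^ l1.length := by
        calc 2 * k ^ l2.length ≤ k * k ^ l2.length := by
              have := Nat.one_le_pow l2.length k (by omega)
              exact Nat.mul_le_mul_right _ hk
        _ = k ^ (l2.length + 1) := by ring
        _ ≤ k ^ l1.length := Nat.pow_le_pow_right (by omega) (by omega)
      have h3 : k ^ l1.length ≤ enc k l1 := by simp [enc]
      omega
  have hcode : code k l1 = code k l2 := by
    simp only [enc, hlen] at h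
    omega
  exact code_inj (by omega) l1 l2 hlen hcode

lemma ball_len_le (hγ : 1 < γ) {N r : ℕ} (hr : r < junctionDist γ (N + 1))
    {v : SparseVertex k γ} (hv : v ∈ ball k γ r) : v.val.1.length ≤ N + 1 := by
  by_contra hlen
  push_neg at hlen
  have hne : v.val.1 ≠ [] := by
    intro he
    rw [he] at hlen
    simp at hlen
  rcases v.property with ⟨h1, _⟩ | ⟨_, ht1, _⟩
  · exact hne h1
  have hfd : fdist v = junctionDist γ (v.val.1.length - 1) + v.val.2 := by
    simp [fdist, hne]
  have hmono : junctionDist γ (N + 1) ≤ junctionDist γ (v.val.1.length - 1) :=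
    junctionDist_mono (by omega)
  have : fdist v ≤ r := hv
  omega

lemma ball_pos_le (hγ : 1 < γ) {N r : ℕ} (hr : r < junctionDist γ (N + 1))
    {v : SparseVertex k γ} (hv : v ∈ ball k γ r) : v.val.2 ≤ edgeLen γ (N + 1) := by
  rcases v.property with ⟨_, h2⟩ | ⟨hne, _, ht2⟩
  · simp [h2]
  have hlen := ball_len_le hγ hr hv
  exact ht2.trans (edgeLen_mono hγ hlen)

lemma ball_upper (hγ : 1 < γ) (hk : 2 ≤ k) {N r : ℕ} (hr : r < junctionDist γ (N + 1)) :
    (ball k γ r).Finite ∧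
    (ball k γ r).ncard ≤ 2 * k ^ (N + 2) * (edgeLen γ (N + 1) + 1) := by
  set A := 2 * k ^ (N + 2) with hA
  set B := edgeLen γ (N + 1) + 1 with hB
  let ψ : SparseVertex k γ → ℕ × ℕ := fun v => (enc k v.val.1, v.val.2)
  have hinj : Set.InjOn ψ (ball k γ r) := by
    intro x _ y _ hxy
    simp only [ψ, Prod.mk.injEq] at hxy
    apply Subtype.ext
    exact Prod.ext (enc_inj hk hxy.1) hxy.2
  have hmaps : ∀ v ∈ ball k γ r, ψ v ∈ (↑(Finset.range A ×ˢ Finset.range B) : Set (ℕ × ℕ)) := by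
    intro v hv
    rw [Finset.mem_coe, Finset.mem_product, Finset.mem_range, Finset.mem_range]
    simp only [ψ]
    constructor
    · have h1 : enc k v.val.1 < 2 * k ^ v.val.1.length := enc_lt (by omega) _
      have h2 : 2 * k ^ v.val.1.length ≤ A := by
        rw [hA]
        have : k ^ v.val.1.length ≤ k ^ (N + 2) :=
          Nat.pow_le_pow_right (by omega) (by have := ball_len_le hγ hr hv; omega)
        omega
      omega
    · have := ball_pos_le hγ hr hv
      omega
  have hfin : (ball k γ r).Finite := by
    apply Set.Finite.of_finite_image _ hinj
    exact Set.Finite.subset (Finset.range A ×ˢ Finset.range B).finite_toSet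
      (Set.image_subset_iff.2 hmaps)
  refine ⟨hfin, ?_⟩
  calc (ball k γ r).ncard ≤ (↑(Finset.range A ×ˢ Finset.range B) : Set (ℕ × ℕ)).ncard :=
        Set.ncard_le_ncard_of_injOn ψ hmaps hinj (Finset.finite_toSet _)
  _ = A * B := by
        rw [Set.ncard_coe_finset, Finset.card_product, Finset.card_range, Finset.card_range]

-- ===== the index N(r) =====

def Nr (γ : ℝ) (r : ℕ) : ℕ := Nat.findGreatest (fun N => junctionDist γ N ≤ r) r

lemma Nr_le (r : ℕ) : junctionDist γ (Nr γ r) ≤ r :=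
  Nat.findGreatest_spec (P := fun N => junctionDist γ N ≤ r) (Nat.zero_le r)
    (by simp [junctionDist_zero])

lemma Nr_gt (hγ : 1 < γ) (r : ℕ) : r < junctionDist γ (Nr γ r + 1) := by
  by_cases h : Nr γ r + 1 ≤ r
  · have := Nat.findGreatest_is_greatest (P := fun N => junctionDist γ N ≤ r)
      (k := Nr γ r + 1) (n := r) (Nat.lt_succ_self _) h
    omega
  · have h1 := le_junctionDist hγ (Nr γ r + 1)
    omega

lemma Nr_tendsto (hγ : 1 < γ) : Filter.Tendsto (Nr γ) Filter.atTop Filter.atTop := by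
  rw [Filter.tendsto_atTop_atTop]
  intro b
  refine ⟨junctionDist γ b, fun r hr => ?_⟩
  exact Nat.le_findGreatest ((le_junctionDist hγ b).trans hr) hr

lemma ge_one_of_Nr {r : ℕ} (hr : 1 ≤ Nr γ r) : True := trivial

-- ===== analytic limit lemma =====

lemma tendsto_aux (L l a b : ℝ) (hl : l ≠ 0) :
    Filter.Tendsto (fun n : ℕ => ((n : ℝ) * L + a) / ((n : ℝ) * l + b))
      Filter.atTop (nhds (L / l)) := by
  have h0 : Filter.Tendsto (fun n : ℕ => (1 : ℝ) / n) Filter.atTop (nhds 0) :=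
    tendsto_one_div_atTop_nhds_zero_nat
  have hnum : Filter.Tendsto (fun n : ℕ => L + a * (1 / n)) Filter.atTop (nhds L) := by
    have h := (tendsto_const_nhds : Filter.Tendsto (fun _ : ℕ => L) Filter.atTop (nhds L))
    simpa using h.add (h0.const_mul a)
  have hden : Filter.Tendsto (fun n : ℕ => l + b * (1 / n)) Filter.atTop (nhds l) := by
    have h := (tendsto_const_nhds : Filter.Tendsto (fun _ : ℕ => l) Filter.atTop (nhds l))
    simpa using h.add (h0.const_mul b)
  have hdiv := hnum.div hden hl
  apply hdiv.congr'
  filter_upwards [Filter.eventually_ge_atTop 1] with n hn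
  have hne : (n : ℝ) ≠ 0 := by positivity
  have e1 : (n : ℝ) * (L + a * (1 / n)) = (n : ℝ) * L + a := by field_simp
  have e2 : (n : ℝ) * (l + b * (1 / n)) = (n : ℝ) * l + b := by field_simp
  calc (L + a * (1 / n)) / (l + b * (1 / n))
      = (n : ℝ) * (L + a * (1 / n)) / ((n : ℝ) * (l + b * (1 / n))) :=
        (mul_div_mul_left _ _ hne).symm
  _ = ((n : ℝ) * L + a) / ((n : ℝ) * l + b) := by rw [e1, e2]

end Sparse

open Filter Sparse

/-- For k ≥ 2 and γ > 1, the ball B(r) = {x : d(x,O) ≤ r} in Γ_{k,γ}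
satisfies lim_{r→∞} (log #B(r))/(log r) = log(γk)/log γ = 1 + (log k)/(log γ). -/
theorem sparse_tree_dimension (k : ℕ) (γ : ℝ) (hk : 2 ≤ k) (hγ : 1 < γ) :
    Filter.Tendsto
      (fun r : ℕ =>
        Real.log ({v : SparseVertex k γ | distToRoot v ≤ r}.ncard) / Real.log r)
      Filter.atTop (nhds (Real.log (γ * k) / Real.log γ)) ∧
    Real.log (γ * k) / Real.log γ = 1 + Real.log k / Real.log γ := by

  have hγ0 : (0:ℝ) < γ := lt_trans one_pos hγ
  have hK2 : (2:ℝ) ≤ (k:ℝ) := by exact_mod_cast hk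
  have hK0 : (0:ℝ) < (k:ℝ) := by linarith
  have hgk1 : (1:ℝ) < γ * k := by nlinarith
  have hl : 0 < Real.log γ := Real.log_pos hγ
  have hLpos : 0 < Real.log (γ * k) := Real.log_pos hgk1
  have hsecond : Real.log (γ * k) / Real.log γ = 1 + Real.log k / Real.log γ := by
    rw [Real.log_mul (ne_of_gt hγ0) (by positivity : (k:ℝ) ≠ 0), add_div,
      div_self (ne_of_gt hl)]
  refine ⟨?_, hsecond⟩
  set l := Real.log γ with hldef
  set L := Real.log (γ * k) with hLdef
  have hset : ∀ r : ℕ, {v : SparseVertex k γ | distToRoot v ≤ r} = Sparse.ball k γ r := by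
    intro r; ext v; simp [Sparse.ball, Sparse.distToRoot_eq hγ, Set.mem_setOf_eq]
  simp only [hset]
  set a1 : ℝ := -Real.log 2 with ha1
  set b1 : ℝ := 2*l - Real.log (γ - 1) with hb1
  set a2 : ℝ := 2*L + Real.log 4 with ha2
  set b2 : ℝ := -Real.log 2 with hb2
  have hg1 := Sparse.tendsto_aux L l a1 b1 (ne_of_gt hl)
  have hg2 := Sparse.tendsto_aux L l a2 b2 (ne_of_gt hl)
  have hNr := Sparse.Nr_tendsto (γ := γ) hγ
  have hev1 : ∀ᶠ n : ℕ in atTop, 0 < (n:ℝ)*l + b2 := by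
    have h := Filter.tendsto_atTop_add_const_right Filter.atTop b2
      ((tendsto_natCast_atTop_atTop (R := ℝ)).atTop_mul_const hl)
    exact h.eventually_gt_atTop 0
  have hev2 : ∀ᶠ n : ℕ in atTop, 0 < (n:ℝ)*L + a1 := by
    have h := Filter.tendsto_atTop_add_const_right Filter.atTop a1
      ((tendsto_natCast_atTop_atTop (R := ℝ)).atTop_mul_const hLpos)
    exact h.eventually_gt_atTop 0
  have hev4 : ∀ᶠ n : ℕ in atTop, 1 ≤ n := eventually_ge_atTop 1
  have hNev := hNr.eventually ((hev1.and (hev2.and hev4)))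
  have hmain : ∀ᶠ r : ℕ in atTop,
      ((fun n : ℕ => ((n:ℝ)*L + a1)/((n:ℝ)*l + b1)) ∘ (Nr γ)) r ≤
        Real.log ((Sparse.ball k γ r).ncard) / Real.log r ∧
      Real.log ((Sparse.ball k γ r).ncard) / Real.log r ≤
        ((fun n : ℕ => ((n:ℝ)*L + a2)/((n:ℝ)*l + b2)) ∘ (Nr γ)) r := by
    filter_upwards [hNev, eventually_ge_atTop 2] with r hE hr2
    obtain ⟨hd2, hA1, hn1⟩ := hE
    have hjle : junctionDist γ (Nr γ r) ≤ r := Sparse.Nr_le r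
    have hjgt : r < junctionDist γ (Nr γ r + 1) := Sparse.Nr_gt hγ r
    obtain ⟨hfin, hub⟩ := Sparse.ball_upper hγ hk (N := Nr γ r) hjgt
    have hlb := Sparse.ball_lower hγ hn1 hjle hfin
    set n := Nr γ r with hn
    set C := ((Sparse.ball k γ r).ncard : ℝ) with hC
    have hC1 : (γ * k)^n / 2 ≤ C := by
      have e1 := Sparse.half_le_edgeLen hγ n
      have e3 : ((k ^ n * edgeLen γ n : ℕ) : ℝ) ≤ C := by rw [hC]; exact_mod_cast hlb
      have e4 : ((k:ℝ))^n * (γ^n/2) ≤ ((k:ℝ))^n * (edgeLen γ n : ℝ) :=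
        mul_le_mul_of_nonneg_left e1 (by positivity)
      push_cast at e3
      calc (γ*(k:ℝ))^n/2 = (k:ℝ)^n * (γ^n/2) := by rw [mul_pow]; ring
      _ ≤ (k:ℝ)^n * (edgeLen γ n : ℝ) := e4
      _ ≤ C := e3
    have hCpos : 0 < C := lt_of_lt_of_le (by positivity) hC1
    have hC2 : C ≤ 4 * (γ*k)^(n+2) := by
      have e1 : ((2 * k ^ (n + 2) * (edgeLen γ (n + 1) + 1) : ℕ) : ℝ) =
          2*(k:ℝ)^(n+2)*((edgeLen γ (n+1):ℝ)+1) := by push_cast; ring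
      have e2 : C ≤ 2*(k:ℝ)^(n+2)*((edgeLen γ (n+1):ℝ)+1) := by
        rw [← e1, hC]; exact_mod_cast hub
      have e3 : (edgeLen γ (n+1) : ℝ) ≤ γ^(n+1) := Sparse.edgeLen_le hγ _
      have e4 : (1:ℝ) ≤ γ^(n+1) := one_le_pow₀ hγ.le
      have e5 : γ^(n+1) ≤ γ^(n+2) := pow_le_pow_right₀ hγ.le (by omega)
      have e6 : 2*(k:ℝ)^(n+2)*((edgeLen γ (n+1):ℝ)+1) ≤ 2*(k:ℝ)^(n+2)*(2*γ^(n+2)) := by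
        apply mul_le_mul_of_nonneg_left ?_ (by positivity)
        linarith
      calc C ≤ 2*(k:ℝ)^(n+2)*((edgeLen γ (n+1):ℝ)+1) := e2
      _ ≤ 2*(k:ℝ)^(n+2)*(2*γ^(n+2)) := e6
      _ = 4 * (γ*(k:ℝ))^(n+2) := by rw [mul_pow]; ring
    have hr_low : γ^n/2 ≤ (r:ℝ) := by
      have e1 := Sparse.half_le_edgeLen hγ n
      have e2 := Sparse.edgeLen_le_junctionDist hγ hn1
      have e3 : (junctionDist γ n : ℝ) ≤ r := by exact_mod_cast hjle
      have e4 : (edgeLen γ n : ℝ) ≤ (junctionDist γ n : ℝ) := by exact_mod_cast e2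
      linarith
    have hr_up : (r:ℝ) ≤ γ^(n+2)/(γ-1) := by
      have e1 : (r:ℝ) ≤ (junctionDist γ (n+1) : ℝ) := by exact_mod_cast (le_of_lt hjgt)
      have e2 : (junctionDist γ (n+1) : ℝ) ≤ γ^(n+2)/(γ-1) := by
        simpa using Sparse.junctionDist_le hγ (n+1)
      linarith
    have hr2R : (2:ℝ) ≤ (r:ℝ) := by exact_mod_cast hr2
    have hlogr_pos : 0 < Real.log r := Real.log_pos (by linarith)
    have hlogC_low : (n:ℝ)*L + a1 ≤ Real.log C := by
      have h := Real.log_le_log (by positivity : (0:ℝ) < (γ*(k:ℝ))^n/2) hC1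
      rw [Real.log_div (by positivity) (by norm_num), Real.log_pow] at h
      rw [← hLdef] at h
      linarith
    have hlogC_up : Real.log C ≤ (n:ℝ)*L + a2 := by
      have h := Real.log_le_log hCpos hC2
      rw [Real.log_mul (by norm_num) (by positivity), Real.log_pow] at h
      rw [← hLdef] at h
      have e : Real.log 4 + ((n:ℝ)+2)*L = (n:ℝ)*L + (2*L + Real.log 4) := by ring
      push_cast at h
      linarith
    have hlogr_low : (n:ℝ)*l + b2 ≤ Real.log r := by
      have h := Real.log_le_log (by positivity : (0:ℝ) < γ^n/2) hr_low
      rw [Real.log_div (by positivity) (by norm_num), Real.log_pow] at h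
      rw [← hldef] at h
      linarith
    have hlogr_up : Real.log r ≤ (n:ℝ)*l + b1 := by
      have h := Real.log_le_log (by linarith : (0:ℝ) < (r:ℝ)) hr_up
      rw [Real.log_div (by positivity) (by intro h0; linarith), Real.log_pow] at h
      rw [← hldef] at h
      have e : ((n:ℝ)+2)*l - Real.log (γ-1) = (n:ℝ)*l + (2*l - Real.log (γ-1)) := by ring
      push_cast at h
      linarith
    constructor
    · exact div_le_div₀ (le_trans hA1.le hlogC_low) hlogC_low hlogr_pos hlogr_up
    · have ha2nonneg : 0 ≤ (n:ℝ)*L + a2 := by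
        have h4 : 0 ≤ Real.log 4 := Real.log_nonneg (by norm_num)
        have hnL : 0 ≤ (n:ℝ)*L := mul_nonneg (Nat.cast_nonneg n) hLpos.le
        rw [ha2]; linarith
      exact div_le_div₀ ha2nonneg hlogC_up hd2 hlogr_low
  exact tendsto_of_tendsto_of_tendsto_of_le_of_le' (hg1.comp hNr) (hg2.comp hNr)
    (hmain.mono fun r h => h.1) (hmain.mono fun r h => h.2)

end
end

section
/- For k ≥ 2 and γ > 1 with D = (log γk)/(log γ), there exist constants c₁, c₂ > 0 such that c₁ r^D ≤ #B(r) ≤ c₂ r^D for all r ≥ 1, where B(r) is the ball of radius r about the root of Γ_{k,γ}. -/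
open Classical

noncomputable section

namespace SparseAux

variable {k : ℕ} {γ : ℝ}

/-- height function: claimed distance to root -/
def fh (v : SparseVertex k γ) : ℕ :=
  if v.val.1 = [] then 0 else junctionDist γ (v.val.1.length - 1) + v.val.2

lemma jd_zero : junctionDist γ 0 = 0 := by simp [junctionDist]

lemma jd_succ (N : ℕ) : junctionDist γ (N + 1) = junctionDist γ N + edgeLen γ (N + 1) :=
  Finset.sum_Icc_succ_top (by omega) _

lemma jd_pred_add {n : ℕ} (hn : 1 ≤ n) :
    junctionDist γ (n - 1) + edgeLen γ n = junctionDist γ n := by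
  obtain ⟨m, rfl⟩ : ∃ m, n = m + 1 := ⟨n - 1, by omega⟩
  simp [jd_succ]

lemma one_le_edgeLen (hγ : 1 < γ) (j : ℕ) : 1 ≤ edgeLen γ j :=
  Nat.le_floor (by simpa using one_le_pow₀ (le_of_lt hγ) (n := j))

lemma jd_mono : Monotone (junctionDist γ) := by
  intro a b hab
  exact Finset.sum_le_sum_of_subset (Finset.Icc_subset_Icc_right hab)

lemma self_le_jd (hγ : 1 < γ) (N : ℕ) : N ≤ junctionDist γ N := by
  induction N with
  | zero => simp [jd_zero]
  | succ N ih => have := one_le_edgeLen hγ (N + 1); rw [jd_succ]; omega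

lemma eq_root (v : SparseVertex k γ) (h : v.val.1 = []) : v = sparseRoot k γ := by
  obtain ⟨⟨w, t⟩, hp⟩ := v
  simp only at h
  rcases hp with ⟨h1, h2⟩ | ⟨h1, _⟩
  · exact Subtype.ext (Prod.ext h1 h2)
  · exact absurd h h1

lemma fh_root : fh (sparseRoot k γ) = 0 := by simp [fh, sparseRoot]

lemma vprop (v : SparseVertex k γ) (h : v.val.1 ≠ []) :
    1 ≤ v.val.2 ∧ v.val.2 ≤ edgeLen γ v.val.1.length :=
  (v.property.resolve_left (fun h' => h h'.1)).2

lemma fh_eq (v : SparseVertex k γ) (h : v.val.1 ≠ []) :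
    fh v = junctionDist γ (v.val.1.length - 1) + v.val.2 := if_neg h

lemma fwd_fh {v u : SparseVertex k γ} (h : forwardNbr v u) : fh u = fh v + 1 := by
  rcases h with ⟨hj, h1, h2⟩ | ⟨hj, c, h1, h2⟩
  · have hw : v.val.1 ≠ [] := by
      intro he
      exact hj (Or.inl ⟨he, ((v.property.resolve_right (fun h' => h'.1 he))).2⟩)
    have hw' : u.val.1 ≠ [] := by rw [h1]; exact hw
    rw [fh_eq v hw, fh_eq u hw', h1, h2]
    omega
  · have hw' : u.val.1 ≠ [] := by rw [h1]; simp
    have hlen : u.val.1.length = v.val.1.length + 1 := by rw [h1]; simp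
    rcases hj with ⟨hnil, _⟩ | ⟨hnil, ht⟩
    · have h0 : fh v = 0 := by simp [fh, hnil]
      rw [fh_eq u hw', h0, hlen, hnil]
      simp [jd_zero, h2]
    · have hn : 1 ≤ v.val.1.length := List.length_pos_iff.mpr hnil
      rw [fh_eq u hw', fh_eq v hnil, hlen, h2, ht, Nat.add_sub_cancel, ← jd_pred_add hn]

lemma adj_fh {v u : SparseVertex k γ} (h : (sparseGraph k γ).Adj v u) :
    fh u = fh v + 1 ∨ fh v = fh u + 1 := by
  rw [sparseGraph, SimpleGraph.fromRel_adj] at h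
  rcases h.2 with h' | h'
  · exact Or.inl (fwd_fh h')
  · exact Or.inr (fwd_fh h')

lemma fh_le_walk {a b : SparseVertex k γ} (p : (sparseGraph k γ).Walk a b) :
    fh b ≤ fh a + p.length := by
  induction p with
  | nil => simp
  | @cons a c b h p ih =>
    rcases adj_fh h with h' | h' <;>
      simp only [SimpleGraph.Walk.length_cons] <;> omega

end SparseAux

namespace SparseAux

variable {k : ℕ} {γ : ℝ}

lemma exists_walk (hγ : 1 < γ) : ∀ m : ℕ, ∀ v : SparseVertex k γ, fh v = m →
    ∃ p : (sparseGraph k γ).Walk (sparseRoot k γ) v, p.length = m := by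
  intro m
  induction m using Nat.strong_induction_on with
  | _ m ih =>
    intro v hv
    by_cases hw : v.val.1 = []
    · obtain rfl := eq_root v hw
      exact ⟨SimpleGraph.Walk.nil, by rw [← hv, fh_root]; rfl⟩
    · obtain ⟨ht1, ht2⟩ := vprop v hw
      have hfh := fh_eq v hw
      set n := v.val.1.length with hn
      have hn1 : 1 ≤ n := List.length_pos_iff.mpr hw
      by_cases ht : 2 ≤ v.val.2
      · -- step back along the segment
        set u : SparseVertex k γ := ⟨(v.val.1, v.val.2 - 1), Or.inr ⟨hw, by omega, by
          show v.val.2 - 1 ≤ edgeLen γ v.val.1.length; rw [← hn]; omega⟩⟩ with hudef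
        have huw : u.val.1 = v.val.1 := rfl
        have hut : u.val.2 = v.val.2 - 1 := rfl
        have hfu : fh u = m - 1 := by
          rw [fh_eq u (by rw [huw]; exact hw), huw, hut, ← hn]
          omega
        have hnj : ¬ isJunction u := by
          rintro (⟨h1, _⟩ | ⟨_, h2⟩)
          · exact hw (by rw [← huw]; exact h1)
          · rw [hut, huw, ← hn] at h2; omega
        have hfwd : forwardNbr u v := Or.inl ⟨hnj, huw.symm, by omega⟩
        have hne : u ≠ v := by
          intro he
          have : u.val.2 = v.val.2 := by rw [he]
          omega
        have hadj : (sparseGraph k γ).Adj u v := by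
          rw [sparseGraph, SimpleGraph.fromRel_adj]
          exact ⟨hne, Or.inl hfwd⟩
        obtain ⟨p, hp⟩ := ih (m - 1) (by omega) u hfu
        exact ⟨p.concat hadj, by rw [SimpleGraph.Walk.length_concat, hp]; omega⟩
      · -- v.val.2 = 1 : step back through the junction
        have ht1' : v.val.2 = 1 := by omega
        by_cases hn2 : n = 1
        · -- previous vertex is the root
          obtain ⟨c, hc⟩ := List.length_eq_one_iff.mp (show (Subtype.val v).1.length = 1 by omega)
          have hfwd : forwardNbr (sparseRoot k γ) v :=
            Or.inr ⟨Or.inl ⟨rfl, rfl⟩, c, by show (Subtype.val v).1 = [] ++ [c]; rw [hc]; rfl, ht1'⟩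
          have hne : sparseRoot k γ ≠ v := by
            intro he
            exact hw (by rw [← he]; rfl)
          have hadj : (sparseGraph k γ).Adj (sparseRoot k γ) v := by
            rw [sparseGraph, SimpleGraph.fromRel_adj]
            exact ⟨hne, Or.inl hfwd⟩
          have hm : m = 1 := by
            rw [← hv, hfh, ht1', hn2]
            simp [jd_zero]
          exact ⟨SimpleGraph.Walk.nil.concat hadj, by
            rw [SimpleGraph.Walk.length_concat, hm]; rfl⟩
        · -- previous vertex is the junction at the end of the previous segment
          have hn2' : 2 ≤ n := by omega
          have hdl : v.val.1.dropLast.length = n - 1 := by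
            rw [List.length_dropLast, hn]
          have hdlne : v.val.1.dropLast ≠ [] := by
            intro he
            have := congrArg List.length he
            rw [hdl] at this
            simp at this
            omega
          set u : SparseVertex k γ := ⟨(v.val.1.dropLast, edgeLen γ (n - 1)),
            Or.inr ⟨hdlne, one_le_edgeLen hγ _, by rw [hdl]⟩⟩ with hudef
          have huw : u.val.1 = v.val.1.dropLast := rfl
          have hut : u.val.2 = edgeLen γ (n - 1) := rfl
          have hjun : isJunction u := Or.inr ⟨hdlne, by rw [hut, huw, hdl]⟩
          have hfwd : forwardNbr u v := by
            refine Or.inr ⟨hjun, v.val.1.getLast hw, ?_, ht1'⟩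
            rw [huw, List.dropLast_append_getLast hw]
          have hfu : fh u = m - 1 := by
            rw [fh_eq u (by rw [huw]; exact hdlne), huw, hut, hdl]
            have : junctionDist γ (n - 1 - 1) + edgeLen γ (n - 1) = junctionDist γ (n - 1) :=
              jd_pred_add (by omega)
            rw [this, ← hv, hfh, ht1']
            omega
          have hne : u ≠ v := by
            intro he
            have : u.val.1.length = v.val.1.length := by rw [he]
            rw [huw, hdl, ← hn] at this
            omega
          have hadj : (sparseGraph k γ).Adj u v := by
            rw [sparseGraph, SimpleGraph.fromRel_adj]
            exact ⟨hne, Or.inl hfwd⟩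
          have hm1 : 1 ≤ m := by omega
          obtain ⟨p, hp⟩ := ih (m - 1) (by omega) u hfu
          exact ⟨p.concat hadj, by rw [SimpleGraph.Walk.length_concat, hp]; omega⟩

lemma dist_eq (hγ : 1 < γ) (v : SparseVertex k γ) : distToRoot v = fh v := by
  obtain ⟨p, hp⟩ := exists_walk hγ (fh v) v rfl
  have h1 : distToRoot v ≤ fh v := by
    rw [← hp]; exact SimpleGraph.dist_le p
  have h2 : fh v ≤ distToRoot v := by
    have hr : (sparseGraph k γ).Reachable (sparseRoot k γ) v := ⟨p⟩
    obtain ⟨q, hq⟩ := hr.exists_walk_length_eq_dist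
    have := fh_le_walk q
    rw [hq, fh_root] at this
    simpa [distToRoot] using this
  omega

end SparseAux

namespace SparseAux

variable {k : ℕ} {γ : ℝ}

/-- parametrization of generation n+1 -/
def genMap (n : ℕ) (x : List.Vector (Fin k) (n + 1) × Fin (edgeLen γ (n + 1))) :
    SparseVertex k γ :=
  ⟨(x.1.toList, x.2.val + 1), Or.inr ⟨by
      intro h
      have h' : x.1.toList = [] := h
      have := x.1.toList_length
      rw [h'] at this
      simp at this,
    by omega,
    by
      show x.2.val + 1 ≤ edgeLen γ x.1.toList.length
      rw [x.1.toList_length]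
      exact x.2.isLt⟩⟩

lemma genMap_inj (n : ℕ) : Function.Injective (genMap (k := k) (γ := γ) n) := by
  rintro ⟨a1, a2⟩ ⟨b1, b2⟩ h
  have h' : ((a1.toList, a2.val + 1) : List (Fin k) × ℕ) = (b1.toList, b2.val + 1) :=
    congrArg Subtype.val h
  rw [Prod.mk.injEq] at h'
  exact Prod.ext (List.Vector.toList_injective h'.1) (Fin.ext (Nat.add_right_cancel h'.2))

lemma genMap_val1 (n : ℕ) (x : List.Vector (Fin k) (n + 1) × Fin (edgeLen γ (n + 1))) :
    (genMap n x).val.1 = x.1.toList := rfl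

lemma fh_genMap (n : ℕ) (x : List.Vector (Fin k) (n + 1) × Fin (edgeLen γ (n + 1))) :
    fh (genMap n x) = junctionDist γ n + (x.2.val + 1) := by
  have hne : (genMap n x).val.1 ≠ [] := by
    rw [genMap_val1]
    intro h
    have := x.1.toList_length
    rw [h] at this
    simp at this
  rw [fh_eq _ hne, genMap_val1, x.1.toList_length]
  rfl

lemma ncard_genMap_range (n : ℕ) :
    (Set.range (genMap (k := k) (γ := γ) n)).ncard = k ^ (n + 1) * edgeLen γ (n + 1) := by
  rw [← Nat.card_coe_set_eq, Nat.card_range_of_injective (genMap_inj n)]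
  simp [Nat.card_eq_fintype_card, card_vector]

/-- the covering set -/
def cover (N : ℕ) : Set (SparseVertex k γ) :=
  insert (sparseRoot k γ) (⋃ n ∈ Finset.range N, Set.range (genMap n))

lemma cover_finite (N : ℕ) : (cover (k := k) (γ := γ) N).Finite :=
  Set.Finite.insert _ (Set.Finite.biUnion (Finset.range N).finite_toSet
    (fun n _ => Set.finite_range _))

lemma biUnion_card (N : ℕ) :
    (⋃ n ∈ Finset.range N, Set.range (genMap (k := k) (γ := γ) n)).ncard ≤
      ∑ n ∈ Finset.range N, k ^ (n + 1) * edgeLen γ (n + 1) := by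
  induction N with
  | zero => simp
  | succ N ih =>
    rw [Finset.range_add_one, Finset.set_biUnion_insert, Finset.sum_insert Finset.notMem_range_self]
    calc (Set.range (genMap N) ∪ ⋃ n ∈ Finset.range N, Set.range (genMap n)).ncard
        ≤ (Set.range (genMap N)).ncard +
          (⋃ n ∈ Finset.range N, Set.range (genMap (k := k) (γ := γ) n)).ncard :=
          Set.ncard_union_le _ _
      _ ≤ k ^ (N + 1) * edgeLen γ (N + 1) + ∑ n ∈ Finset.range N, k ^ (n + 1) * edgeLen γ (n + 1) := by
          rw [ncard_genMap_range]
          omega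

lemma cover_card (N : ℕ) :
    (cover (k := k) (γ := γ) N).ncard ≤
      1 + ∑ n ∈ Finset.range N, k ^ (n + 1) * edgeLen γ (n + 1) := by
  have h1 := Set.ncard_insert_le (sparseRoot k γ)
    (⋃ n ∈ Finset.range N, Set.range (genMap (k := k) (γ := γ) n))
  have h2 := biUnion_card (k := k) (γ := γ) N
  rw [cover]
  omega

lemma ball_subset_cover {r N : ℕ} (h : r < junctionDist γ N) :
    {v : SparseVertex k γ | fh v ≤ r} ⊆ cover N := by
  intro v hv
  simp only [Set.mem_setOf_eq] at hv
  by_cases hw : v.val.1 = []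
  · exact Set.mem_insert_iff.mpr (Or.inl (eq_root v hw))
  · obtain ⟨ht1, ht2⟩ := vprop v hw
    have hn1 : 1 ≤ v.val.1.length := List.length_pos_iff.mpr hw
    have hfh := fh_eq v hw
    have hlt : v.val.1.length - 1 < N := by
      by_contra hcon
      have := jd_mono (γ := γ) (show N ≤ v.val.1.length - 1 by omega)
      omega
    refine Set.mem_insert_iff.mpr (Or.inr ?_)
    rw [Set.mem_iUnion₂]
    refine ⟨v.val.1.length - 1, Finset.mem_range.mpr hlt, ?_⟩
    have hlen : v.val.1.length = v.val.1.length - 1 + 1 := by omega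
    refine ⟨(⟨v.val.1, hlen⟩, ⟨v.val.2 - 1, ?_⟩), ?_⟩
    · rw [← hlen]; omega
    · apply Subtype.ext
      show (v.val.1, v.val.2 - 1 + 1) = v.val
      have h2 : v.val.2 - 1 + 1 = v.val.2 := by omega
      rw [h2]

lemma ball_finite (hγ : 1 < γ) (r : ℕ) : {v : SparseVertex k γ | fh v ≤ r}.Finite := by
  refine Set.Finite.subset (cover_finite (r + 1)) (ball_subset_cover ?_)
  have := self_le_jd hγ (r + 1)
  omega

lemma genMap_range_subset_ball {r n : ℕ} (h : junctionDist γ (n + 1) ≤ r) :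
    Set.range (genMap (k := k) (γ := γ) n) ⊆ {v : SparseVertex k γ | fh v ≤ r} := by
  rintro _ ⟨x, rfl⟩
  simp only [Set.mem_setOf_eq]
  rw [fh_genMap]
  have hx := x.2.isLt
  have := jd_pred_add (γ := γ) (n := n + 1) (by omega)
  simp only [Nat.add_sub_cancel] at this
  omega

lemma card_le_ball (hγ : 1 < γ) {r n : ℕ} (h : junctionDist γ (n + 1) ≤ r) :
    k ^ (n + 1) * edgeLen γ (n + 1) ≤ {v : SparseVertex k γ | fh v ≤ r}.ncard := by
  rw [← ncard_genMap_range (k := k) (γ := γ) n]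
  exact Set.ncard_le_ncard (genMap_range_subset_ball h) (ball_finite hγ r)

lemma one_le_ball (hγ : 1 < γ) (r : ℕ) : 1 ≤ {v : SparseVertex k γ | fh v ≤ r}.ncard := by
  have : (0:ℕ) < {v : SparseVertex k γ | fh v ≤ r}.ncard := by
    rw [Set.ncard_pos (ball_finite hγ r)]
    exact ⟨sparseRoot k γ, by simp [Set.mem_setOf_eq, fh_root]⟩
  omega

end SparseAux

namespace SparseAux

variable {k : ℕ} {γ : ℝ}

lemma edge_le (hγ : 1 < γ) (j : ℕ) : (edgeLen γ j : ℝ) ≤ γ ^ j :=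
  Nat.floor_le (by positivity)

lemma edge_ge (hγ : 1 < γ) (j : ℕ) : γ ^ j / 2 ≤ (edgeLen γ j : ℝ) := by
  by_cases h : γ ^ j < 2
  · have h1 : (1 : ℝ) ≤ (edgeLen γ j : ℝ) := by
      exact_mod_cast one_le_edgeLen hγ j
    linarith
  · have := Nat.sub_one_lt_floor (γ ^ j)
    rw [edgeLen]
    push_neg at h
    linarith

lemma jd_cast_succ (N : ℕ) :
    ((junctionDist γ (N + 1) : ℕ) : ℝ) = (junctionDist γ N : ℝ) + (edgeLen γ (N + 1) : ℝ) := by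
  rw [jd_succ]; push_cast; ring

lemma jd_le_real (hγ : 1 < γ) (N : ℕ) :
    (junctionDist γ N : ℝ) ≤ (γ ^ (N + 1) - γ) / (γ - 1) := by
  induction N with
  | zero => simp [jd_zero]
  | succ N ih =>
    rw [jd_cast_succ]
    have h1 := edge_le hγ (N + 1)
    have hγ1 : (0:ℝ) < γ - 1 := by linarith
    rw [le_div_iff₀ hγ1] at ih ⊢
    have hpow : γ ^ (N + 1 + 1) = γ ^ (N + 1) * γ := by ring
    nlinarith [pow_pos (show (0:ℝ) < γ by linarith) (N + 1),
      mul_le_mul_of_nonneg_right h1 (le_of_lt hγ1)]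

lemma jd_ge_real (hγ : 1 < γ) (N : ℕ) :
    (γ ^ (N + 1) - γ) / (2 * (γ - 1)) ≤ (junctionDist γ N : ℝ) := by
  induction N with
  | zero => simp [jd_zero]
  | succ N ih =>
    rw [jd_cast_succ]
    have h1 := edge_ge hγ (N + 1)
    have hγ1 : (0:ℝ) < γ - 1 := by linarith
    rw [div_le_iff₀ (by linarith : (0:ℝ) < 2 * (γ - 1))] at ih ⊢
    have hpow : γ ^ (N + 1 + 1) = γ ^ (N + 1) * γ := by ring
    nlinarith [pow_pos (show (0:ℝ) < γ by linarith) (N + 1),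
      mul_le_mul_of_nonneg_right h1 (le_of_lt hγ1)]

lemma sum_le_real (hγ : 1 < γ) (hk : 2 ≤ k) (N : ℕ) :
    ((∑ n ∈ Finset.range N, k ^ (n + 1) * edgeLen γ (n + 1) : ℕ) : ℝ) ≤
      (γ * k) ^ (N + 1) / (γ * k - 1) := by
  have hk2 : (2:ℝ) ≤ (k:ℝ) := by exact_mod_cast hk
  have hγk : (1:ℝ) < γ * k := by nlinarith
  have hγk0 : (0:ℝ) < γ * k - 1 := by linarith
  induction N with
  | zero =>
    simp only [Finset.range_zero, Finset.sum_empty, Nat.cast_zero]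
    positivity
  | succ N ih =>
    rw [Finset.sum_range_succ]
    push_cast
    push_cast at ih
    have hterm : (k:ℝ) ^ (N + 1) * (edgeLen γ (N + 1) : ℝ) ≤ (γ * k) ^ (N + 1) := by
      have := edge_le hγ (N + 1)
      have hkp : (0:ℝ) < (k:ℝ) ^ (N + 1) := by positivity
      calc (k:ℝ) ^ (N + 1) * (edgeLen γ (N + 1) : ℝ) ≤ (k:ℝ) ^ (N + 1) * γ ^ (N + 1) := by
            exact mul_le_mul_of_nonneg_left this (le_of_lt hkp)
        _ = (γ * k) ^ (N + 1) := by rw [mul_pow]; ring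
    have hkey : (γ * k) ^ (N + 1) / (γ * k - 1) + (γ * k) ^ (N + 1) =
        (γ * k) ^ (N + 1 + 1) / (γ * k - 1) := by
      field_simp
      ring
    linarith

end SparseAux

/-- For k ≥ 2, γ > 1 and D = log(γk)/log γ, there are constants
c₁, c₂ > 0 with c₁ r^D ≤ #B(r) ≤ c₂ r^D for all r ≥ 1. -/
theorem sparse_tree_ball_growth (k : ℕ) (γ : ℝ) (hk : 2 ≤ k) (hγ : 1 < γ)
    (D : ℝ) (hD : D = Real.log (γ * k) / Real.log γ) :
    ∃ c₁ c₂ : ℝ, 0 < c₁ ∧ 0 < c₂ ∧ ∀ r : ℕ, 1 ≤ r →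
      c₁ * (r : ℝ) ^ D ≤ ({v : SparseVertex k γ | distToRoot v ≤ r}.ncard : ℝ) ∧
      ({v : SparseVertex k γ | distToRoot v ≤ r}.ncard : ℝ) ≤ c₂ * (r : ℝ) ^ D := by
  classical
  have hγ0 : (0:ℝ) < γ := by linarith
  have hk2 : (2:ℝ) ≤ (k:ℝ) := by exact_mod_cast hk
  have hγk : (1:ℝ) < γ * k := by nlinarith
  have hγk0 : (0:ℝ) < γ * k := by linarith
  have hγk1 : (0:ℝ) < γ * k - 1 := by linarith
  have hlogγ : 0 < Real.log γ := Real.log_pos hγ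
  have hD0 : 0 < D := by rw [hD]; exact div_pos (Real.log_pos hγk) hlogγ
  have hγD : γ ^ D = γ * k := by
    rw [hD, Real.rpow_def_of_pos hγ0, mul_comm, div_mul_cancel₀ _ (ne_of_gt hlogγ),
      Real.exp_log hγk0]
  have hpowD : ∀ n : ℕ, ((γ:ℝ) ^ n) ^ D = (γ * k) ^ n := by
    intro n
    rw [← Real.rpow_natCast γ n, ← Real.rpow_mul (le_of_lt hγ0), mul_comm,
      Real.rpow_mul (le_of_lt hγ0), hγD, Real.rpow_natCast]
  set A : ℝ := 3 * γ - 2 with hAdef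
  have hApos : (0:ℝ) < A := by rw [hAdef]; linarith
  have hq0 : (0:ℝ) < (γ - 1) / γ ^ 2 := div_pos (by linarith) (by positivity)
  set c₂ : ℝ := 1 + (γ * k) * A ^ D / (γ * k - 1) with hc₂def
  set c₁ : ℝ := min ((γ * k)⁻¹) (((γ - 1) / γ ^ 2) ^ D / 2) with hc₁def
  have hc₁ : 0 < c₁ := by
    apply lt_min (inv_pos.mpr hγk0)
    have := Real.rpow_pos_of_pos hq0 D
    linarith
  have hc₂ : 0 < c₂ := by
    have h1 : (0:ℝ) ≤ (γ * k) * A ^ D / (γ * k - 1) := by positivity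
    rw [hc₂def]; linarith
  refine ⟨c₁, c₂, hc₁, hc₂, ?_⟩
  intro r hr
  have hset : {v : SparseVertex k γ | distToRoot v ≤ r} =
      {v : SparseVertex k γ | SparseAux.fh v ≤ r} := by
    ext v
    simp [SparseAux.dist_eq hγ]
  rw [hset]
  set B := {v : SparseVertex k γ | SparseAux.fh v ≤ r} with hBdef
  have hrR : (1:ℝ) ≤ (r:ℝ) := by exact_mod_cast hr
  have hrD1 : (1:ℝ) ≤ (r:ℝ) ^ D := by
    calc (1:ℝ) = 1 ^ D := (Real.one_rpow D).symm
      _ ≤ (r:ℝ) ^ D := Real.rpow_le_rpow zero_le_one hrR (le_of_lt hD0)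
  have hrD0 : (0:ℝ) < (r:ℝ) ^ D := by linarith
  have hex : ∃ m : ℕ, r < junctionDist γ m :=
    ⟨r + 1, by have := SparseAux.self_le_jd hγ (r + 1); omega⟩
  set M := Nat.find hex with hMdef
  have hMspec : r < junctionDist γ M := Nat.find_spec hex
  have hM1 : 1 ≤ M := by
    rcases Nat.eq_zero_or_pos M with h | h
    · rw [h, SparseAux.jd_zero] at hMspec; omega
    · omega
  have hMpred : junctionDist γ (M - 1) ≤ r := by
    have := Nat.find_min hex (show M - 1 < M by omega)
    omega
  constructor
  · -- LOWER BOUND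
    by_cases hM2 : 2 ≤ M
    · have hsub : junctionDist γ ((M - 2) + 1) ≤ r := by
        have h : M - 2 + 1 = M - 1 := by omega
        rw [h]; exact hMpred
      have hcard := SparseAux.card_le_ball (k := k) hγ hsub
      have hM21 : M - 2 + 1 = M - 1 := by omega
      rw [hM21] at hcard
      have hcardR : ((k:ℝ)) ^ (M - 1) * (edgeLen γ (M - 1) : ℝ) ≤ (B.ncard : ℝ) := by
        exact_mod_cast hcard
      have hE := SparseAux.edge_ge hγ (M - 1)
      have hγM : (γ * k) ^ (M - 1) / 2 ≤ (B.ncard : ℝ) := by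
        have hkp : (0:ℝ) ≤ (k:ℝ) ^ (M - 1) := by positivity
        calc (γ * k) ^ (M - 1) / 2 = (k:ℝ) ^ (M - 1) * (γ ^ (M - 1) / 2) := by
              rw [mul_pow]; ring
          _ ≤ (k:ℝ) ^ (M - 1) * (edgeLen γ (M - 1) : ℝ) :=
              mul_le_mul_of_nonneg_left hE hkp
          _ ≤ _ := hcardR
      have hjdM := SparseAux.jd_le_real hγ M
      have hrM : (r:ℝ) < (junctionDist γ M : ℝ) := by exact_mod_cast hMspec
      have hpow2 : γ ^ (M + 1) = γ ^ (M - 1) * γ ^ 2 := by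
        rw [← pow_add]; congr 1; omega
      have hγ10 : (0:ℝ) < γ - 1 := by linarith
      have h5 : (r:ℝ) < (γ ^ (M + 1) - γ) / (γ - 1) := lt_of_lt_of_le hrM hjdM
      rw [lt_div_iff₀ hγ10] at h5
      have hkey : ((γ - 1) / γ ^ 2) * r ≤ γ ^ (M - 1) := by
        rw [div_mul_eq_mul_div, div_le_iff₀ (by positivity : (0:ℝ) < γ ^ 2)]
        nlinarith
      have hfinal : ((γ - 1) / γ ^ 2) ^ D * (r:ℝ) ^ D ≤ (γ ^ (M - 1)) ^ D := by
        rw [← Real.mul_rpow (le_of_lt hq0) (Nat.cast_nonneg r)]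
        exact Real.rpow_le_rpow (by positivity) hkey (le_of_lt hD0)
      rw [hpowD (M - 1)] at hfinal
      calc c₁ * (r:ℝ) ^ D ≤ (((γ - 1) / γ ^ 2) ^ D / 2) * (r:ℝ) ^ D :=
            mul_le_mul_of_nonneg_right (min_le_right _ _) (le_of_lt hrD0)
        _ ≤ (γ * k) ^ (M - 1) / 2 := by linarith
        _ ≤ (B.ncard : ℝ) := hγM
    · have hMe : M = 1 := by omega
      have hone : 1 ≤ B.ncard := SparseAux.one_le_ball hγ r
      have honeR : (1:ℝ) ≤ (B.ncard : ℝ) := by exact_mod_cast hone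
      have hrγ : (r:ℝ) ≤ γ := by
        have hEγ := SparseAux.edge_le hγ 1
        have hjd1 : junctionDist γ 1 = edgeLen γ 1 := by
          have h := SparseAux.jd_succ (γ := γ) 0
          norm_num [SparseAux.jd_zero] at h
          exact h
        have hrlt : r < edgeLen γ 1 := by rw [hMe, hjd1] at hMspec; exact hMspec
        have : (r:ℝ) < (edgeLen γ 1 : ℝ) := by exact_mod_cast hrlt
        have hγ1 : γ ^ 1 = γ := pow_one γ
        linarith [hEγ, hγ1 ▸ hEγ]
      have hrDb : (r:ℝ) ^ D ≤ γ * k := by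
        calc (r:ℝ) ^ D ≤ γ ^ D := Real.rpow_le_rpow (Nat.cast_nonneg r) hrγ (le_of_lt hD0)
          _ = γ * k := hγD
      calc c₁ * (r:ℝ) ^ D ≤ (γ * k)⁻¹ * (γ * k) :=
            mul_le_mul (min_le_left _ _) hrDb (le_of_lt hrD0) (le_of_lt (inv_pos.mpr hγk0))
        _ = 1 := inv_mul_cancel₀ (ne_of_gt hγk0)
        _ ≤ (B.ncard : ℝ) := honeR
  · -- UPPER BOUND
    have hsubc := SparseAux.ball_subset_cover (γ := γ) (k := k) hMspec
    have hcard : B.ncard ≤ 1 + ∑ n ∈ Finset.range M, k ^ (n + 1) * edgeLen γ (n + 1) :=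
      le_trans (Set.ncard_le_ncard hsubc (SparseAux.cover_finite M)) (SparseAux.cover_card M)
    have hcardR : (B.ncard : ℝ) ≤
        1 + ((∑ n ∈ Finset.range M, k ^ (n + 1) * edgeLen γ (n + 1) : ℕ) : ℝ) := by
      exact_mod_cast hcard
    have hsum := SparseAux.sum_le_real hγ hk M
    have hjdlow := SparseAux.jd_ge_real hγ (M - 1)
    have hM11 : M - 1 + 1 = M := by omega
    rw [hM11] at hjdlow
    have hjdR : (junctionDist γ (M - 1) : ℝ) ≤ (r:ℝ) := by exact_mod_cast hMpred
    have hγM : γ ^ M ≤ A * r := by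
      have h2 : (γ ^ M - γ) / (2 * (γ - 1)) ≤ (r:ℝ) := le_trans hjdlow hjdR
      rw [div_le_iff₀ (by linarith : (0:ℝ) < 2 * (γ - 1))] at h2
      rw [hAdef]
      linarith [mul_nonneg (le_of_lt hγ0) (sub_nonneg.mpr hrR)]
    have hγMD : (γ * k) ^ M ≤ A ^ D * (r:ℝ) ^ D := by
      rw [← hpowD M, ← Real.mul_rpow (le_of_lt hApos) (Nat.cast_nonneg r)]
      exact Real.rpow_le_rpow (by positivity) hγM (le_of_lt hD0)
    have h3 : (γ * k) ^ (M + 1) ≤ (γ * k) * (A ^ D * (r:ℝ) ^ D) := by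
      calc (γ * k) ^ (M + 1) = (γ * k) * (γ * k) ^ M := by ring
        _ ≤ (γ * k) * (A ^ D * (r:ℝ) ^ D) := mul_le_mul_of_nonneg_left hγMD (le_of_lt hγk0)
    have hfin : (γ * k) ^ (M + 1) / (γ * k - 1) ≤ (γ * k) * (A ^ D * (r:ℝ) ^ D) / (γ * k - 1) :=
      by gcongr
    calc (B.ncard : ℝ) ≤ 1 + (γ * k) ^ (M + 1) / (γ * k - 1) := by linarith
      _ ≤ 1 + (γ * k) * (A ^ D * (r:ℝ) ^ D) / (γ * k - 1) := by linarith
      _ ≤ c₂ * (r:ℝ) ^ D := by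
        have heq : (γ * k) * (A ^ D * (r:ℝ) ^ D) / (γ * k - 1) =
            ((γ * k) * A ^ D / (γ * k - 1)) * (r:ℝ) ^ D := by ring
        have heq2 : c₂ * (r:ℝ) ^ D =
            (r:ℝ) ^ D + ((γ * k) * A ^ D / (γ * k - 1)) * (r:ℝ) ^ D := by
          rw [hc₂def]; ring
        rw [heq, heq2]
        linarith

end
end

section
/- Let H be a bounded self-adjoint operator on ℓ²(V), Ω ⊆ V finite, and let H_Ω = H − T where T consists of the hopping terms ⟨δ_x, H δ_y⟩ for pairs (x,y) with exactly one of x, y in Ω. Then for z non-real and x, w ∈ V with x ∈ Ω and w ∉ Ω⁺⁺ (the 2-neighborhood of Ω), the matrix element of the resolvent expands as ⟨δ_x, (H−z)^{-1} δ_w⟩ = Σ_{(u,u') ∈ Θ(Ω)} Σ_{(y,y') ∈ Θ(Ω⁺⁺)} ⟨δ_x, (H_Ω−z)^{-1} δ_u⟩ ⟨δ_u, T δ_{u'}⟩ ⟨δ_{u'}, (H−z)^{-1} δ_y⟩ ⟨δ_y, T' δ_{y'}⟩ ⟨δ_{y'}, (H_{Ω⁺⁺}−z)^{-1} δ_w⟩,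 where Θ(Ω) is the set of ordered boundary bonds (u,u') with u ∈ Ω, u' ∉ Ω, d(u,u') = 1, and T' = H − H_{Ω⁺⁺}. -/
noncomputable section
open scoped Classical

/-- The delta function at x ∈ V, an element of the standard orthonormal basis of ℓ²(V). -/
def deltaFn (V : Type*) [DecidableEq V] (x : V) : lp (fun _ : V => ℂ) 2 :=
  lp.single 2 x 1

namespace DRI
variable {V : Type*} [DecidableEq V]

local notation "E" => lp (fun _ : V => ℂ) 2
local notation "δ" => deltaFn V

lemma coord (v : E) (i : V) : (inner ℂ (δ i) v : ℂ) = v i := by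
  rw [deltaFn, lp.inner_single_left]
  simp

lemma delta_inner_delta (i j : V) : (inner ℂ (δ i) (δ j) : ℂ) = if i = j then 1 else 0 := by
  rw [coord, deltaFn, lp.single_apply]
  by_cases h : i = j <;> simp [h, eq_comm]

lemma lp_ext {v w : E} (h : ∀ i, (inner ℂ (δ i) v : ℂ) = inner ℂ (δ i) w) : v = w := by
  apply lp.ext
  funext i
  have := h i
  rwa [coord, coord] at this

lemma clm_ext_delta {A B : E →L[ℂ] E} (h : ∀ i, A (δ i) = B (δ i)) : A = B := by
  refine ContinuousLinearMap.ext fun f => ?_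
  have hf : HasSum (fun i : V => lp.single 2 i (f i)) f := lp.hasSum_single (by norm_num) f
  have h1 : HasSum (fun i : V => A (lp.single 2 i (f i))) (A f) := hf.mapL A
  have h2 : HasSum (fun i : V => B (lp.single 2 i (f i))) (B f) := hf.mapL B
  have : (fun i : V => A (lp.single 2 i (f i))) = fun i => B (lp.single 2 i (f i)) := by
    funext i
    have hs : lp.single 2 i (f i) = (f i) • (δ i) := by
      rw [deltaFn, ← lp.single_smul, smul_eq_mul, mul_one]
    rw [hs, map_smul, map_smul, h i]
  rw [this] at h1
  exact h1.unique h2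

lemma clm_ext_matrix {A B : E →L[ℂ] E}
    (h : ∀ i j, (inner ℂ (δ i) (A (δ j)) : ℂ) = inner ℂ (δ i) (B (δ j))) : A = B :=
  clm_ext_delta fun j => lp_ext fun i => h i j


def rk (i j : V) : E →L[ℂ] E := (innerSL ℂ (δ j)).smulRight (δ i)

lemma rk_apply (i j : V) (v : E) : rk i j v = (inner ℂ (δ j) v : ℂ) • δ i := rfl

lemma finite_support_decomp (S : Finset (V × V)) (A : E →L[ℂ] E)
    (h : ∀ i j : V, (i, j) ∉ S → (inner ℂ (δ i) (A (δ j)) : ℂ) = 0) :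
    A = ∑ p ∈ S, (inner ℂ (δ p.1) (A (δ p.2)) : ℂ) • rk p.1 p.2 := by
  apply clm_ext_matrix
  intro i j
  rw [ContinuousLinearMap.sum_apply, inner_sum]
  have hterm : ∀ p ∈ S,
      (inner ℂ (δ i) ((((inner ℂ (δ p.1) (A (δ p.2)) : ℂ)) • rk p.1 p.2) (δ j)) : ℂ) =
      if (i, j) = p then (inner ℂ (δ p.1) (A (δ p.2)) : ℂ) else 0 := by
    intro p _
    rw [ContinuousLinearMap.smul_apply, inner_smul_right, rk_apply, inner_smul_right,
      delta_inner_delta, delta_inner_delta]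
    by_cases h1 : i = p.1 <;> by_cases h2 : p.2 = j <;>
      simp [Prod.ext_iff, h1, h2, eq_comm] 
  rw [Finset.sum_congr rfl hterm, Finset.sum_ite_eq]
  by_cases hmem : (i, j) ∈ S
  · simp [hmem]
  · simp [hmem, h i j hmem]

lemma sandwich (S : Finset (V × V)) (Tm A M : E →L[ℂ] E)
    (hsupp : ∀ i j : V, (i, j) ∉ S → (inner ℂ (δ i) (Tm (δ j)) : ℂ) = 0) (x w : V) :
    (inner ℂ (δ x) (A (Tm (M (δ w)))) : ℂ) =
      ∑ p ∈ S, (inner ℂ (δ x) (A (δ p.1)) : ℂ) * (inner ℂ (δ p.1) (Tm (δ p.2)) : ℂ) *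
        (inner ℂ (δ p.2) (M (δ w)) : ℂ) := by
  conv_lhs => rw [finite_support_decomp S Tm hsupp]
  rw [ContinuousLinearMap.sum_apply, map_sum, inner_sum]
  refine Finset.sum_congr rfl fun p _ => ?_
  rw [ContinuousLinearMap.smul_apply, rk_apply, map_smul, map_smul, inner_smul_right,
    inner_smul_right]
  ring

def proj (s : Finset V) : E →L[ℂ] E := ∑ u ∈ s, rk u u

lemma inner_proj (s : Finset V) (i : V) (v : E) :
    (inner ℂ (δ i) (proj s v) : ℂ) = if i ∈ s then (inner ℂ (δ i) v : ℂ) else 0 := by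
  rw [proj, ContinuousLinearMap.sum_apply, inner_sum]
  have hterm : ∀ u ∈ s, (inner ℂ (δ i) (rk u u v) : ℂ) =
      if i = u then (inner ℂ (δ i) v : ℂ) else 0 := by
    intro u _
    rw [rk_apply, inner_smul_right, delta_inner_delta]
    by_cases h : i = u <;> simp [h, mul_comm]
  rw [Finset.sum_congr rfl hterm, Finset.sum_ite_eq]

lemma proj_delta (s : Finset V) (j : V) : proj s (δ j) = if j ∈ s then δ j else 0 := by
  apply lp_ext
  intro i
  rw [inner_proj, delta_inner_delta]
  by_cases h1 : i ∈ s <;> by_cases h2 : j ∈ s <;> by_cases h3 : i = j <;>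
    simp_all [delta_inner_delta, -inner_self_eq_norm_sq_to_K]

lemma decoupling (Ωs : Set V) (hfin : Ωs.Finite) (K Rk : E →L[ℂ] E)
    (hdec : ∀ a b : V, ((a ∈ Ωs ∧ b ∉ Ωs) ∨ (a ∉ Ωs ∧ b ∈ Ωs)) →
      (inner ℂ (δ a) (K (δ b)) : ℂ) = 0)
    (h1 : K * Rk = 1) (h2 : Rk * K = 1)
    {a b : V} (ha : a ∈ Ωs) (hb : b ∉ Ωs) :
    (inner ℂ (δ a) (Rk (δ b)) : ℂ) = 0 := by
  set P := proj hfin.toFinset with hP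
  have hPK : P * K = K * P := by
    apply clm_ext_matrix
    intro i j
    rw [ContinuousLinearMap.mul_apply, ContinuousLinearMap.mul_apply, inner_proj, proj_delta]
    by_cases hi : i ∈ hfin.toFinset <;> by_cases hj : j ∈ hfin.toFinset <;>
      simp only [hi, hj, if_true, if_false, map_zero, inner_zero_right]
    · exact (hdec i j (Or.inl ⟨hfin.mem_toFinset.mp hi, fun h => hj (hfin.mem_toFinset.mpr h)⟩))
    · exact (hdec i j (Or.inr ⟨fun h => hi (hfin.mem_toFinset.mpr h), hfin.mem_toFinset.mp hj⟩)).symm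
  have comm : Rk * P = P * Rk := by
    calc Rk * P = Rk * P * (K * Rk) := by rw [h1, mul_one]
      _ = Rk * (P * K) * Rk := by noncomm_ring
      _ = Rk * (K * P) * Rk := by rw [hPK]
      _ = (Rk * K) * (P * Rk) := by noncomm_ring
      _ = P * Rk := by rw [h2, one_mul]
  have : (inner ℂ (δ a) (Rk (δ b)) : ℂ) = inner ℂ (δ a) ((P * Rk) (δ b)) := by
    rw [ContinuousLinearMap.mul_apply, inner_proj, if_pos (hfin.mem_toFinset.mpr ha)]
  rw [this, ← comm, ContinuousLinearMap.mul_apply, hP, proj_delta,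
    if_neg (fun h => hb (hfin.mem_toFinset.mp h)), map_zero, inner_zero_right]

lemma tsum_finite_subtype {α : Type*} (s : Set α) (hs : s.Finite) (f : α → ℂ) :
    ∑' x : s, f x = ∑ x ∈ hs.toFinset, f x := by
  rw [tsum_subtype, tsum_eq_sum (s := hs.toFinset)
    (fun b hb => Set.indicator_of_notMem (fun h => hb (hs.mem_toFinset.mpr h)) f)]
  exact Finset.sum_congr rfl fun b hb => Set.indicator_of_mem (hs.mem_toFinset.mp hb) f

lemma ball2_finite (G : SimpleGraph V) (hdeg : ∀ v : V, {u : V | G.Adj v u}.Finite)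
    (Ω : Set V) (hΩ : Ω.Finite) :
    {v : V | ∃ u ∈ Ω, ∃ p : G.Walk u v, p.length ≤ 2}.Finite := by
  have hsub : {v : V | ∃ u ∈ Ω, ∃ p : G.Walk u v, p.length ≤ 2} ⊆
      Ω ∪ (⋃ u ∈ Ω, {v | G.Adj u v}) ∪
        (⋃ u ∈ Ω, ⋃ a ∈ {v | G.Adj u v}, {v | G.Adj a v}) := by
    rintro v ⟨u, hu, p, hp⟩
    cases p with
    | nil => exact Or.inl (Or.inl hu)
    | cons h q =>
      cases q with
      | nil =>
        refine Or.inl (Or.inr ?_)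
        simp only [Set.mem_iUnion, Set.mem_setOf_eq]
        exact ⟨u, hu, h⟩
      | cons h' q' =>
        cases q' with
        | nil =>
          refine Or.inr ?_
          simp only [Set.mem_iUnion, Set.mem_setOf_eq]
          exact ⟨u, hu, _, h, h'⟩
        | cons h'' q'' =>
          simp only [SimpleGraph.Walk.length_cons] at hp
          omega
  refine (Set.Finite.union (Set.Finite.union hΩ ?_) ?_).subset hsub
  · exact Set.Finite.biUnion hΩ fun u _ => hdeg u
  · exact Set.Finite.biUnion hΩ fun u _ => Set.Finite.biUnion (hdeg u) fun a _ => hdeg a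

lemma cross_finite (G : SimpleGraph V) (hdeg : ∀ v : V, {u : V | G.Adj v u}.Finite)
    (Ω : Set V) (hΩ : Ω.Finite) :
    {b : V × V | (b.1 ∈ Ω ∨ b.2 ∈ Ω) ∧ G.Adj b.1 b.2}.Finite := by
  have hsub : {b : V × V | (b.1 ∈ Ω ∨ b.2 ∈ Ω) ∧ G.Adj b.1 b.2} ⊆
      (⋃ u ∈ Ω, {u} ×ˢ {v | G.Adj u v}) ∪ (⋃ u ∈ Ω, {v | G.Adj u v} ×ˢ {u}) := by
    rintro ⟨a, b⟩ ⟨hab, hadj⟩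
    rcases hab with ha | hb
    · refine Or.inl ?_
      simp only [Set.mem_iUnion, Set.mem_prod, Set.mem_singleton_iff, Set.mem_setOf_eq]
      exact ⟨a, ha, rfl, hadj⟩
    · refine Or.inr ?_
      simp only [Set.mem_iUnion, Set.mem_prod, Set.mem_singleton_iff, Set.mem_setOf_eq]
      exact ⟨b, hb, hadj.symm, rfl⟩
  refine (Set.Finite.union ?_ ?_).subset hsub
  · exact Set.Finite.biUnion hΩ fun u _ => (Set.finite_singleton u).prod (hdeg u)
  · exact Set.Finite.biUnion hΩ fun u _ => (hdeg u).prod (Set.finite_singleton u)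

end DRI

set_option maxHeartbeats 1000000 in
/-- the 'double resolvent' geometric decoupling identity. Let H be a
bounded self-adjoint operator on ℓ²(V) whose off-diagonal matrix elements live on the
edges of a locally finite graph G, let Ω be finite, Ω⁺⁺ its 2-neighborhood, T (resp.
T') the hopping terms crossing the boundary of Ω (resp. Ω⁺⁺), H_Ω = H − T,
H_{Ω⁺⁺} = H − T'. Then for non-real z, x ∈ Ω and w ∉ Ω⁺⁺,
⟨δ_x,(H−z)⁻¹δ_w⟩ = Σ_{(u,u')∈Θ(Ω)} Σ_{(y,y')∈Θ(Ω⁺⁺)} ⟨δ_x,(H_Ω−z)⁻¹δ_u⟩⟨δ_u,Tδ_{u'}⟩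
⟨δ_{u'},(H−z)⁻¹δ_y⟩⟨δ_y,T'δ_{y'}⟩⟨δ_{y'},(H_{Ω⁺⁺}−z)⁻¹δ_w⟩. -/
theorem double_resolvent_identity
    (V : Type*) [DecidableEq V] (G : SimpleGraph V)
    (hdeg : ∀ v : V, {u : V | G.Adj v u}.Finite)
    (H : lp (fun _ : V => ℂ) 2 →L[ℂ] lp (fun _ : V => ℂ) 2) (hH : IsSelfAdjoint H)
    (hloc : ∀ x y : V, x ≠ y → ¬ G.Adj x y →
      (inner ℂ (deltaFn V x) (H (deltaFn V y)) : ℂ) = 0)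
    (Ω : Set V) (hΩfin : Ω.Finite)
    (Ωpp : Set V)
    (hΩpp : Ωpp = {v : V | ∃ u ∈ Ω, ∃ p : G.Walk u v, p.length ≤ 2})
    (T T' : lp (fun _ : V => ℂ) 2 →L[ℂ] lp (fun _ : V => ℂ) 2)
    (hT : ∀ x y : V, (inner ℂ (deltaFn V x) (T (deltaFn V y)) : ℂ) =
      if (x ∈ Ω ∧ y ∉ Ω) ∨ (x ∉ Ω ∧ y ∈ Ω)
      then (inner ℂ (deltaFn V x) (H (deltaFn V y)) : ℂ) else 0)
    (hT' : ∀ x y : V, (inner ℂ (deltaFn V x) (T' (deltaFn V y)) : ℂ) =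
      if (x ∈ Ωpp ∧ y ∉ Ωpp) ∨ (x ∉ Ωpp ∧ y ∈ Ωpp)
      then (inner ℂ (deltaFn V x) (H (deltaFn V y)) : ℂ) else 0)
    (z : ℂ) (hz : z.im ≠ 0)
    (R RΩ RΩpp : lp (fun _ : V => ℂ) 2 →L[ℂ] lp (fun _ : V => ℂ) 2)
    (hR₁ : (H - z • 1) ∘L R = 1) (hR₂ : R ∘L (H - z • 1) = 1)
    (hRΩ₁ : (H - T - z • 1) ∘L RΩ = 1) (hRΩ₂ : RΩ ∘L (H - T - z • 1) = 1)
    (hRΩpp₁ : (H - T' - z • 1) ∘L RΩpp = 1) (hRΩpp₂ : RΩpp ∘L (H - T' - z • 1) = 1)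
    (x w : V) (hx : x ∈ Ω) (hw : w ∉ Ωpp) :
    (inner ℂ (deltaFn V x) (R (deltaFn V w)) : ℂ) =
      ∑' b : {b : V × V // b.1 ∈ Ω ∧ b.2 ∉ Ω ∧ G.Adj b.1 b.2},
        ∑' b' : {b' : V × V // b'.1 ∈ Ωpp ∧ b'.2 ∉ Ωpp ∧ G.Adj b'.1 b'.2},
          (inner ℂ (deltaFn V x) (RΩ (deltaFn V b.val.1)) : ℂ) *
          (inner ℂ (deltaFn V b.val.1) (T (deltaFn V b.val.2)) : ℂ) *
          (inner ℂ (deltaFn V b.val.2) (R (deltaFn V b'.val.1)) : ℂ) *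
          (inner ℂ (deltaFn V b'.val.1) (T' (deltaFn V b'.val.2)) : ℂ) *
          (inner ℂ (deltaFn V b'.val.2) (RΩpp (deltaFn V w)) : ℂ) := by
  classical
  have hΩppFin : Ωpp.Finite := by rw [hΩpp]; exact DRI.ball2_finite G hdeg Ω hΩfin
  have hΩsub : Ω ⊆ Ωpp := by
    intro v hv; rw [hΩpp]; exact ⟨v, hv, SimpleGraph.Walk.nil, by simp⟩
  have hadj_mem : ∀ u v : V, u ∈ Ω → G.Adj u v → v ∈ Ωpp := by
    intro u v hu h; rw [hΩpp]
    exact ⟨u, hu, SimpleGraph.Walk.cons h SimpleGraph.Walk.nil, by simp⟩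
  have hw' : w ∉ Ω := fun h => hw (hΩsub h)
  -- finite support sets
  have hSf : {b : V × V | ((b.1 ∈ Ω ∧ b.2 ∉ Ω) ∨ (b.1 ∉ Ω ∧ b.2 ∈ Ω)) ∧ G.Adj b.1 b.2}.Finite :=
    (DRI.cross_finite G hdeg Ω hΩfin).subset (by rintro b ⟨hc, hadj⟩; exact ⟨by tauto, hadj⟩)
  have hSf' : {b : V × V |
      ((b.1 ∈ Ωpp ∧ b.2 ∉ Ωpp) ∨ (b.1 ∉ Ωpp ∧ b.2 ∈ Ωpp)) ∧ G.Adj b.1 b.2}.Finite :=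
    (DRI.cross_finite G hdeg Ωpp hΩppFin).subset (by rintro b ⟨hc, hadj⟩; exact ⟨by tauto, hadj⟩)
  have hF : {b : V × V | b.1 ∈ Ω ∧ b.2 ∉ Ω ∧ G.Adj b.1 b.2}.Finite :=
    hSf.subset (by rintro b ⟨h1, h2, h3⟩; exact ⟨Or.inl ⟨h1, h2⟩, h3⟩)
  have hF' : {b : V × V | b.1 ∈ Ωpp ∧ b.2 ∉ Ωpp ∧ G.Adj b.1 b.2}.Finite :=
    hSf'.subset (by rintro b ⟨h1, h2, h3⟩; exact ⟨Or.inl ⟨h1, h2⟩, h3⟩)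
  -- support of T, T'
  have hsuppT : ∀ i j : V, (i, j) ∉ hSf.toFinset →
      (inner ℂ (deltaFn V i) (T (deltaFn V j)) : ℂ) = 0 := by
    intro i j hij
    rw [hT i j]
    split_ifs with hc
    · have hne : i ≠ j := by rintro rfl; tauto
      have hadj : ¬ G.Adj i j := fun hadj => hij (hSf.mem_toFinset.mpr ⟨hc, hadj⟩)
      exact hloc i j hne hadj
    · rfl
  have hsuppT' : ∀ i j : V, (i, j) ∉ hSf'.toFinset →
      (inner ℂ (deltaFn V i) (T' (deltaFn V j)) : ℂ) = 0 := by
    intro i j hij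
    rw [hT' i j]
    split_ifs with hc
    · have hne : i ≠ j := by rintro rfl; tauto
      have hadj : ¬ G.Adj i j := fun hadj => hij (hSf'.mem_toFinset.mpr ⟨hc, hadj⟩)
      exact hloc i j hne hadj
    · rfl
  -- decoupling matrix elements
  have hdecT : ∀ a b : V, ((a ∈ Ω ∧ b ∉ Ω) ∨ (a ∉ Ω ∧ b ∈ Ω)) →
      (inner ℂ (deltaFn V a) ((H - T - z • 1) (deltaFn V b)) : ℂ) = 0 := by
    intro a b hc
    have hab : a ≠ b := by rintro rfl; tauto
    rw [ContinuousLinearMap.sub_apply, ContinuousLinearMap.sub_apply,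
      ContinuousLinearMap.smul_apply, ContinuousLinearMap.one_apply,
      inner_sub_right, inner_sub_right, inner_smul_right, hT a b, if_pos hc,
      DRI.delta_inner_delta, if_neg hab]
    ring
  have hdecT' : ∀ a b : V, ((a ∈ Ωpp ∧ b ∉ Ωpp) ∨ (a ∉ Ωpp ∧ b ∈ Ωpp)) →
      (inner ℂ (deltaFn V a) ((H - T' - z • 1) (deltaFn V b)) : ℂ) = 0 := by
    intro a b hc
    have hab : a ≠ b := by rintro rfl; tauto
    rw [ContinuousLinearMap.sub_apply, ContinuousLinearMap.sub_apply,
      ContinuousLinearMap.smul_apply, ContinuousLinearMap.one_apply,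
      inner_sub_right, inner_sub_right, inner_smul_right, hT' a b, if_pos hc,
      DRI.delta_inner_delta, if_neg hab]
    ring
  -- multiplicative forms
  have m1 : (H - T - z • 1) * RΩ = 1 := hRΩ₁
  have m2 : RΩ * (H - T - z • 1) = 1 := hRΩ₂
  have m1' : (H - T' - z • 1) * RΩpp = 1 := hRΩpp₁
  have m2' : RΩpp * (H - T' - z • 1) = 1 := hRΩpp₂
  have mR1 : (H - z • 1) * R = 1 := hR₁
  have mR2 : R * (H - z • 1) = 1 := hR₂
  have ringlem1 : ∀ a b c d : lp (fun _ : V => ℂ) 2 →L[ℂ] lp (fun _ : V => ℂ) 2,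
      a * (b * d) = a * (b - c) * d + a * c * d := by
    intro a b c d; noncomm_ring
  have ringlem2 : ∀ a b c d : lp (fun _ : V => ℂ) 2 →L[ℂ] lp (fun _ : V => ℂ) 2,
      (d * b) * a = d * ((b - c) * a) + d * c * a := by
    intro a b c d; noncomm_ring
  have ringlem3 : ∀ a e c d : lp (fun _ : V => ℂ) 2 →L[ℂ] lp (fun _ : V => ℂ) 2,
      a - e * (c - d) = a - e * c + e * d := by
    intro a e c d; noncomm_ring
  have hsub1 : H - T - z • 1 = (H - z • 1) - T := sub_right_comm H T (z • 1)
  have hsub1' : H - T' - z • 1 = (H - z • 1) - T' := sub_right_comm H T' (z • 1)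
  -- resolvent identities
  have e1 : RΩ = R + RΩ * T * R := by
    calc RΩ = RΩ * ((H - z • 1) * R) := by rw [mR1, mul_one]
      _ = (RΩ * ((H - z • 1) - T)) * R + RΩ * T * R := ringlem1 RΩ (H - z • 1) T R
      _ = (RΩ * (H - T - z • 1)) * R + RΩ * T * R := by rw [hsub1]
      _ = R + RΩ * T * R := by rw [m2, one_mul]
  have e2 : RΩpp = R + R * T' * RΩpp := by
    calc RΩpp = (R * (H - z • 1)) * RΩpp := by rw [mR2, one_mul]
      _ = R * (((H - z • 1) - T') * RΩpp) + R * T' * RΩpp := ringlem2 RΩpp (H - z • 1) T' R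
      _ = R * ((H - T' - z • 1) * RΩpp) + R * T' * RΩpp := by rw [hsub1']
      _ = R + R * T' * RΩpp := by rw [m1', mul_one]
  have k1 : R = RΩ - RΩ * T * R := eq_sub_of_add_eq e1.symm
  have k2 : R = RΩpp - R * T' * RΩpp := eq_sub_of_add_eq e2.symm
  have key : R = RΩ - RΩ * T * RΩpp + RΩ * T * (R * T' * RΩpp) := by
    calc R = RΩ - RΩ * T * R := k1
      _ = RΩ - RΩ * T * (RΩpp - R * T' * RΩpp) := by
          rw [show RΩpp - R * T' * RΩpp = R from k2.symm]
      _ = RΩ - RΩ * T * RΩpp + RΩ * T * (R * T' * RΩpp) :=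
          ringlem3 RΩ (RΩ * T) RΩpp (R * T' * RΩpp)
  -- decoupled matrix elements of resolvents
  have hRΩzero : ∀ a b : V, a ∈ Ω → b ∉ Ω →
      (inner ℂ (deltaFn V a) (RΩ (deltaFn V b)) : ℂ) = 0 := fun a b ha hb =>
    DRI.decoupling Ω hΩfin (H - T - z • 1) RΩ hdecT m1 m2 ha hb
  have hRΩppzero : ∀ a b : V, a ∈ Ωpp → b ∉ Ωpp →
      (inner ℂ (deltaFn V a) (RΩpp (deltaFn V b)) : ℂ) = 0 := fun a b ha hb =>
    DRI.decoupling Ωpp hΩppFin (H - T' - z • 1) RΩpp hdecT' m1' m2' ha hb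
  -- main transitivity
  trans (∑ p ∈ hF.toFinset, ∑ q ∈ hF'.toFinset,
      (inner ℂ (deltaFn V x) (RΩ (deltaFn V p.1)) : ℂ) *
      (inner ℂ (deltaFn V p.1) (T (deltaFn V p.2)) : ℂ) *
      (inner ℂ (deltaFn V p.2) (R (deltaFn V q.1)) : ℂ) *
      (inner ℂ (deltaFn V q.1) (T' (deltaFn V q.2)) : ℂ) *
      (inner ℂ (deltaFn V q.2) (RΩpp (deltaFn V w)) : ℂ))
  · -- LHS = finite double sum
    have expand0 : (inner ℂ (deltaFn V x) (R (deltaFn V w)) : ℂ) =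
        (inner ℂ (deltaFn V x) (RΩ (deltaFn V w)) : ℂ) -
        (inner ℂ (deltaFn V x) ((RΩ * T * RΩpp) (deltaFn V w)) : ℂ) +
        (inner ℂ (deltaFn V x) ((RΩ * T * (R * T' * RΩpp)) (deltaFn V w)) : ℂ) := by
      conv_lhs => rw [key]
      rw [ContinuousLinearMap.add_apply, ContinuousLinearMap.sub_apply, inner_add_right,
        inner_sub_right]
    have term1 : (inner ℂ (deltaFn V x) (RΩ (deltaFn V w)) : ℂ) = 0 := hRΩzero x w hx hw'
    have term2 : (inner ℂ (deltaFn V x) ((RΩ * T * RΩpp) (deltaFn V w)) : ℂ) = 0 := by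
      have h0 : (RΩ * T * RΩpp) (deltaFn V w) = RΩ (T (RΩpp (deltaFn V w))) := rfl
      rw [h0, DRI.sandwich hSf.toFinset T RΩ RΩpp hsuppT x w]
      refine Finset.sum_eq_zero fun p hp => ?_
      have hp' := hSf.mem_toFinset.mp hp
      simp only [Set.mem_setOf_eq] at hp'
      rcases hp'.1 with ⟨h1, h2⟩ | ⟨h1, h2⟩
      · rw [hRΩppzero p.2 w (hadj_mem p.1 p.2 h1 hp'.2) hw, mul_zero]
      · rw [hRΩzero x p.1 hx h1]; ring
    have term3 : (inner ℂ (deltaFn V x) ((RΩ * T * (R * T' * RΩpp)) (deltaFn V w)) : ℂ) =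
        ∑ p ∈ hSf.toFinset, ∑ q ∈ hSf'.toFinset,
          (inner ℂ (deltaFn V x) (RΩ (deltaFn V p.1)) : ℂ) *
          (inner ℂ (deltaFn V p.1) (T (deltaFn V p.2)) : ℂ) *
          (inner ℂ (deltaFn V p.2) (R (deltaFn V q.1)) : ℂ) *
          (inner ℂ (deltaFn V q.1) (T' (deltaFn V q.2)) : ℂ) *
          (inner ℂ (deltaFn V q.2) (RΩpp (deltaFn V w)) : ℂ) := by
      have h0 : (RΩ * T * (R * T' * RΩpp)) (deltaFn V w) =
          RΩ (T ((R ∘L (T' ∘L RΩpp)) (deltaFn V w))) := rfl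
      rw [h0, DRI.sandwich hSf.toFinset T RΩ (R ∘L (T' ∘L RΩpp)) hsuppT x w]
      refine Finset.sum_congr rfl fun p hp => ?_
      have hin : (inner ℂ (deltaFn V p.2) ((R ∘L (T' ∘L RΩpp)) (deltaFn V w)) : ℂ) =
          ∑ q ∈ hSf'.toFinset,
            (inner ℂ (deltaFn V p.2) (R (deltaFn V q.1)) : ℂ) *
            (inner ℂ (deltaFn V q.1) (T' (deltaFn V q.2)) : ℂ) *
            (inner ℂ (deltaFn V q.2) (RΩpp (deltaFn V w)) : ℂ) := by
        have h1 : (R ∘L (T' ∘L RΩpp)) (deltaFn V w) = R (T' (RΩpp (deltaFn V w))) := rfl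
        rw [h1, DRI.sandwich hSf'.toFinset T' R RΩpp hsuppT' p.2 w]
      rw [hin, Finset.mul_sum]
      exact Finset.sum_congr rfl fun q hq => by ring
    rw [expand0, term1, term2, term3, sub_zero, zero_add]
    have hsubF : hF.toFinset ⊆ hSf.toFinset := by
      rw [Set.Finite.toFinset_subset_toFinset]
      rintro b ⟨h1, h2, h3⟩; exact ⟨Or.inl ⟨h1, h2⟩, h3⟩
    have hsubF' : hF'.toFinset ⊆ hSf'.toFinset := by
      rw [Set.Finite.toFinset_subset_toFinset]
      rintro b ⟨h1, h2, h3⟩; exact ⟨Or.inl ⟨h1, h2⟩, h3⟩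
    have houter : ∀ p ∈ hSf.toFinset, p ∉ hF.toFinset →
        (∑ q ∈ hSf'.toFinset,
          (inner ℂ (deltaFn V x) (RΩ (deltaFn V p.1)) : ℂ) *
          (inner ℂ (deltaFn V p.1) (T (deltaFn V p.2)) : ℂ) *
          (inner ℂ (deltaFn V p.2) (R (deltaFn V q.1)) : ℂ) *
          (inner ℂ (deltaFn V q.1) (T' (deltaFn V q.2)) : ℂ) *
          (inner ℂ (deltaFn V q.2) (RΩpp (deltaFn V w)) : ℂ)) = 0 := by
      intro p hp hpF
      have hp' := hSf.mem_toFinset.mp hp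
      simp only [Set.mem_setOf_eq] at hp'
      have h1 : p.1 ∉ Ω := by
        rcases hp'.1 with ⟨ha, hb⟩ | ⟨ha, hb⟩
        · exact absurd (hF.mem_toFinset.mpr ⟨ha, hb, hp'.2⟩) hpF
        · exact ha
      refine Finset.sum_eq_zero fun q _ => ?_
      rw [hRΩzero x p.1 hx h1]; ring
    have hinner : ∀ p : V × V, ∀ q ∈ hSf'.toFinset, q ∉ hF'.toFinset →
        (inner ℂ (deltaFn V x) (RΩ (deltaFn V p.1)) : ℂ) *
        (inner ℂ (deltaFn V p.1) (T (deltaFn V p.2)) : ℂ) *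
        (inner ℂ (deltaFn V p.2) (R (deltaFn V q.1)) : ℂ) *
        (inner ℂ (deltaFn V q.1) (T' (deltaFn V q.2)) : ℂ) *
        (inner ℂ (deltaFn V q.2) (RΩpp (deltaFn V w)) : ℂ) = 0 := by
      intro p q hq hqF
      have hq' := hSf'.mem_toFinset.mp hq
      simp only [Set.mem_setOf_eq] at hq'
      have h2 : q.2 ∈ Ωpp := by
        rcases hq'.1 with ⟨ha, hb⟩ | ⟨ha, hb⟩
        · exact absurd (hF'.mem_toFinset.mpr ⟨ha, hb, hq'.2⟩) hqF
        · exact hb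
      rw [hRΩppzero q.2 w h2 hw]; ring
    refine Eq.trans (Finset.sum_subset hsubF houter).symm
      (Finset.sum_congr rfl fun p _ => (Finset.sum_subset hsubF' (hinner p)).symm)
  · -- finite double sum = double tsum
    refine Eq.trans (Finset.sum_congr rfl fun p _ =>
      (DRI.tsum_finite_subtype _ hF' _).symm) ?_
    exact (DRI.tsum_finite_subtype _ hF _).symm

end
end
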